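/- arXiv:1808.03624 — 5 statements merged into one kernel-verified Lean document; each statement's English description precedes it below -/
import Mathlib

section
/- Let α ∈ (-1, 0) and let u : ℝ^n → ℝ be measurable with ∫_{ℝ^n} |y|^{nα} e^{n u(y)} dy < ∞. Then for every fixed x ∈ ℝ^n, the average (1/|B_R(x)|) ∫_{B_R(x)} u⁺ dy → 0 as R → ∞. -/
open Real MeasureTheory Metric Filter
set_option maxHeartbeats 1000000 in

theorem stmt_2 (n : ℕ) (hn : 1 ≤ n) (α : ℝ) (hα : α ∈ Set.Ioo (-1 : ℝ) 0)
    (u : EuclideanSpace ℝ (Fin n) → ℝ) (hu : Measurable u)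
    (hint : Integrable (fun y => ‖y‖ ^ ((n : ℝ) * α) * Real.exp ((n : ℝ) * u y)))
    (x : EuclideanSpace ℝ (Fin n)) :
    Tendsto (fun R : ℝ =>
        (volume (ball x R)).toReal⁻¹ * ∫ y in ball x R, max (u y) 0)
      atTop (nhds 0) := by
  obtain ⟨hα1, hα0⟩ := hα
  have hnpos : (0:ℝ) < n := by exact_mod_cast hn
  haveI : Nonempty (Fin n) := ⟨⟨0, by omega⟩⟩
  haveI : Nontrivial (EuclideanSpace ℝ (Fin n)) := inferInstance
  set f : EuclideanSpace ℝ (Fin n) → ℝ := fun y => ‖y‖ ^ ((n:ℝ)*α) * Real.exp ((n:ℝ) * u y) with hfdef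
  have hf0 : ∀ y, 0 ≤ f y := fun y =>
    mul_nonneg (Real.rpow_nonneg (norm_nonneg _) _) (Real.exp_pos _).le
  set I := ∫ y, f y with hIdef
  have hI0 : (0:ℝ) ≤ I := integral_nonneg hf0
  set c := (volume (ball (0:EuclideanSpace ℝ (Fin n)) 1)).toReal with hcdef
  have hc0 : 0 < c :=
    ENNReal.toReal_pos (measure_ball_pos _ _ one_pos).ne' measure_ball_lt_top.ne
  have hnα : (0:ℝ) < -((n:ℝ)*α) := by nlinarith
  have hnα1 : (0:ℝ) < (n:ℝ)*(α+1) := by nlinarith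
  set K : ℝ := c⁻¹ * (n:ℝ)⁻¹ * (2:ℝ)^(-((n:ℝ)*α)) * I with hKdef
  have lower : ∀ R : ℝ, 0 ≤ (volume (ball x R)).toReal⁻¹ * ∫ y in ball x R, max (u y) 0 := by
    intro R
    exact mul_nonneg (by positivity) (integral_nonneg fun y => le_max_right _ _)
  have key : ∀ R : ℝ, max 1 ‖x‖ ≤ R →
      (volume (ball x R)).toReal⁻¹ * ∫ y in ball x R, max (u y) 0
        ≤ K * R ^ (-((n:ℝ)*(α+1))) := by
    intro R hR
    have hR1 : (1:ℝ) ≤ R := le_trans (le_max_left _ _) hR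
    have hRx : ‖x‖ ≤ R := le_trans (le_max_right _ _) hR
    have hRpos : (0:ℝ) < R := lt_of_lt_of_le one_pos hR1
    have hxR : (0:ℝ) < ‖x‖ + R := by positivity
    have hvol : (volume (ball x R)).toReal = R^n * c := by
      rw [Measure.addHaar_ball_of_pos volume x hRpos, finrank_euclideanSpace_fin, ENNReal.toReal_mul,
        ENNReal.toReal_ofReal (by positivity)]
    set C : ℝ := (n:ℝ)⁻¹ * (‖x‖+R) ^ (-((n:ℝ)*α)) with hCdef
    have hC0 : 0 ≤ C := by positivity
    have hpt : ∀ᵐ y ∂volume, y ∈ ball x R → max (u y) 0 ≤ C * f y := by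
      have h0 : (volume : Measure (EuclideanSpace ℝ (Fin n))) ({0} : Set (EuclideanSpace ℝ (Fin n))) = 0 := measure_singleton 0
      filter_upwards [measure_eq_zero_iff_ae_notMem.mp h0] with y hy hyball
      have hy0 : 0 < ‖y‖ := by
        simpa [norm_pos_iff] using hy
      have hyR : ‖y‖ ≤ ‖x‖ + R := by
        have h1 : ‖y‖ - ‖x‖ ≤ ‖y - x‖ := norm_sub_norm_le _ _
        have h2 : ‖y - x‖ < R := by rwa [← dist_eq_norm, ← mem_ball]
        linarith
      have step1 : max (u y) 0 ≤ (n:ℝ)⁻¹ * Real.exp ((n:ℝ) * u y) := by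
        rcases le_or_gt (u y) 0 with h | h
        · rw [max_eq_right h]; positivity
        · rw [max_eq_left h.le]
          have := Real.add_one_le_exp ((n:ℝ) * u y)
          rw [← mul_le_mul_iff_right₀ hnpos]
          calc (n:ℝ) * u y ≤ Real.exp ((n:ℝ) * u y) := by linarith
            _ = (n:ℝ) * ((n:ℝ)⁻¹ * Real.exp ((n:ℝ)*u y)) := by
                field_simp
      have step2 : (‖x‖+R) ^ ((n:ℝ)*α) ≤ ‖y‖ ^ ((n:ℝ)*α) :=
        Real.rpow_le_rpow_of_nonpos hy0 hyR (by nlinarith)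
      have hprod : (1:ℝ) = (‖x‖+R) ^ (-((n:ℝ)*α)) * (‖x‖+R) ^ ((n:ℝ)*α) := by
        rw [← Real.rpow_add hxR]; simp
      calc max (u y) 0 ≤ (n:ℝ)⁻¹ * Real.exp ((n:ℝ) * u y) := step1
        _ = (n:ℝ)⁻¹ * ((‖x‖+R) ^ (-((n:ℝ)*α)) * (‖x‖+R) ^ ((n:ℝ)*α) * Real.exp ((n:ℝ)*u y)) := by
            rw [← hprod, one_mul]
        _ ≤ (n:ℝ)⁻¹ * ((‖x‖+R) ^ (-((n:ℝ)*α)) * (‖y‖ ^ ((n:ℝ)*α) * Real.exp ((n:ℝ)*u y))) := by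
            rw [mul_assoc ((‖x‖+R) ^ (-((n:ℝ)*α)))]
            have h2 := Real.exp_pos ((n:ℝ)*u y)
            gcongr
        _ = C * f y := by rw [hCdef]; ring
    have hptr : ∀ᵐ y ∂(volume.restrict (ball x R)), max (u y) 0 ≤ C * f y :=
      (ae_restrict_iff' measurableSet_ball).mpr hpt
    have hfint : IntegrableOn f (ball x R) := hint.restrict
    have hupos_int : IntegrableOn (fun y => max (u y) 0) (ball x R) := by
      refine Integrable.mono (hfint.const_mul C) ((hu.max measurable_const).aestronglyMeasurable) ?_
      filter_upwards [hptr] with y hy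
      rw [Real.norm_eq_abs, Real.norm_eq_abs, abs_of_nonneg (le_max_right _ _)]
      exact hy.trans (le_abs_self _)
    have hint1 : ∫ y in ball x R, max (u y) 0 ≤ C * I := by
      calc ∫ y in ball x R, max (u y) 0 ≤ ∫ y in ball x R, C * f y :=
            integral_mono_ae hupos_int (hfint.const_mul C) hptr
        _ = C * ∫ y in ball x R, f y := integral_const_mul _ _
        _ ≤ C * I := by
            gcongr
            exact setIntegral_le_integral hint (Filter.Eventually.of_forall hf0)
    calc (volume (ball x R)).toReal⁻¹ * ∫ y in ball x R, max (u y) 0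
        ≤ (volume (ball x R)).toReal⁻¹ * (C * I) :=
          mul_le_mul_of_nonneg_left hint1 (by positivity)
      _ = (R^n * c)⁻¹ * ((n:ℝ)⁻¹ * (‖x‖+R) ^ (-((n:ℝ)*α)) * I) := by rw [hvol, hCdef]
      _ ≤ (R^n * c)⁻¹ * ((n:ℝ)⁻¹ * (2*R) ^ (-((n:ℝ)*α)) * I) := by
          have h2 : (‖x‖+R) ^ (-((n:ℝ)*α)) ≤ (2*R) ^ (-((n:ℝ)*α)) :=
            Real.rpow_le_rpow hxR.le (by linarith) hnα.le
          exact mul_le_mul_of_nonneg_left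
            (mul_le_mul_of_nonneg_right
              (mul_le_mul_of_nonneg_left h2 (by positivity)) hI0) (by positivity)
      _ = K * R ^ (-((n:ℝ)*(α+1))) := by
          rw [hKdef, Real.mul_rpow (by norm_num) hRpos.le, mul_inv]
          rw [show ((R:ℝ)^n)⁻¹ = R ^ (-(n:ℝ)) by
            rw [← Real.rpow_natCast R n, ← Real.rpow_neg hRpos.le]]
          rw [show R ^ (-((n:ℝ)*(α+1))) = R ^ (-(n:ℝ)) * R ^ (-((n:ℝ)*α)) by
            rw [← Real.rpow_add hRpos]; ring_nf]
          ring
  have hlim : Tendsto (fun R : ℝ => K * R ^ (-((n:ℝ)*(α+1)))) atTop (nhds 0) := by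
    have := (tendsto_rpow_neg_atTop hnα1).const_mul K
    simpa using this
  refine squeeze_zero' (Filter.Eventually.of_forall lower) ?_ hlim
  filter_upwards [eventually_ge_atTop (max 1 ‖x‖)] with R hR
  exact key R hR
end

section
/- Let f₂ ∈ L¹(ℝ^n) be nonnegative with ‖f₂‖_{L¹} ≤ ε, and define u₂(x) = (1/γ) ∫_{ℝ^n} log((1+|y|)/|x-y|) f₂(y) dy with γ > 0. Then for every q ≥ 1 with qn‖f₂‖_{L¹}/γ < n and every R > 0, ∫_{B_R} e^{n q u₂} dx ≤ C(q, R, ε) < ∞. -/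
open Real MeasureTheory Metric
open scoped ENNReal

lemma pow_calc (R s : ℝ) (n k : ℕ) (hR : 0 < R) :
    (R * 2⁻¹ ^ (k+1)) ^ (-s) * (R * 2⁻¹ ^ k) ^ (n:ℕ) =
      (R ^ (-s) * 2 ^ s * R ^ (n:ℕ)) * ((2:ℝ) ^ (s - (n:ℝ))) ^ k := by
  have h2 : (0:ℝ) < 2 := two_pos
  have hw : ∀ m : ℕ, ((2:ℝ)⁻¹) ^ m = (2:ℝ) ^ (-(m:ℝ)) := by
    intro m
    rw [inv_pow, ← Real.rpow_natCast 2 m, ← Real.rpow_neg h2.le]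
  have hwp : ∀ m : ℕ, (0:ℝ) < ((2:ℝ)⁻¹) ^ m := fun m => by positivity
  rw [Real.mul_rpow hR.le (hwp _).le, hw (k+1), ← Real.rpow_mul h2.le, mul_pow, hw k,
    ← Real.rpow_natCast ((2:ℝ)^(-(k:ℝ))) n, ← Real.rpow_mul h2.le,
    ← Real.rpow_natCast ((2:ℝ)^(s-(n:ℝ))) k, ← Real.rpow_mul h2.le]
  have key : ∀ a b : ℝ, (2:ℝ)^a * (2:ℝ)^b = 2^(a+b) := fun a b => (Real.rpow_add h2 a b).symm
  calc R ^ (-s) * 2 ^ (-(((k+1):ℕ):ℝ) * (-s)) * (R ^ n * 2 ^ (-(k:ℝ) * (n:ℝ)))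
      = R ^ (-s) * R ^ n * (2 ^ (-(((k+1):ℕ):ℝ) * (-s)) * 2 ^ (-(k:ℝ) * (n:ℝ))) := by ring
    _ = R ^ (-s) * R ^ n * 2 ^ (s + (s - (n:ℝ)) * (k:ℝ)) := by
        rw [key]; congr 1; push_cast; ring
    _ = R ^ (-s) * R ^ n * (2 ^ s * 2 ^ ((s - (n:ℝ)) * (k:ℝ))) := by rw [key]
    _ = R ^ (-s) * 2 ^ s * R ^ n * 2 ^ ((s - (n:ℝ)) * (k:ℝ)) := by ring

lemma riesz {n : ℕ} (hn : 1 ≤ n) {s R : ℝ} (hs0 : 0 ≤ s) (hsn : s < n) (hR : 0 < R) :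
    ∫⁻ x in ball (0 : EuclideanSpace ℝ (Fin n)) R, ENNReal.ofReal (‖x‖ ^ (-s)) < ⊤ := by
  have : Nonempty (Fin n) := ⟨⟨0, hn⟩⟩
  have : Nontrivial (EuclideanSpace ℝ (Fin n)) := inferInstance
  set E := EuclideanSpace ℝ (Fin n)
  set ν := (volume : Measure E) with hν
  set S : ℕ → Set E := fun k => {x | R * 2⁻¹ ^ (k+1) ≤ ‖x‖} ∩ ball 0 (R * 2⁻¹ ^ k) with hS
  have hwp : ∀ m : ℕ, (0:ℝ) < ((2:ℝ)⁻¹) ^ m := fun m => by positivity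
  have cover : ball (0:E) R ⊆ {0} ∪ ⋃ k, S k := by
    intro x hx
    rcases eq_or_ne x 0 with h | h
    · exact Set.mem_union_left _ (by simp [h])
    · have hx0 : 0 < ‖x‖ := norm_pos_iff.2 h
      have hex : ∃ k : ℕ, R * 2⁻¹ ^ (k+1) ≤ ‖x‖ := by
        obtain ⟨k, hk⟩ := exists_pow_lt_of_lt_one (div_pos hx0 hR) (by norm_num : (2:ℝ)⁻¹ < 1)
        refine ⟨k, ?_⟩
        have : R * 2⁻¹ ^ k < ‖x‖ := by
          rw [mul_comm, ← lt_div_iff₀ hR]; exact hk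
        nlinarith [hwp k, pow_succ (2⁻¹:ℝ) k]
      refine Set.mem_union_right _ (Set.mem_iUnion.2 ⟨Nat.find hex, Nat.find_spec hex, ?_⟩)
      rw [mem_ball_zero_iff]
      rcases Nat.eq_zero_or_eq_succ_pred (Nat.find hex) with h0 | hsucc
      · rw [h0]; simpa using mem_ball_zero_iff.1 hx
      · rw [hsucc]
        have := Nat.find_min hex (m := Nat.find hex - 1) (by omega)
        push_neg at this
        simpa [Nat.succ_eq_add_one] using this
  have hnull : ν ({0} : Set E) = 0 := measure_singleton 0
  have hSk : ∀ k, ∫⁻ x in S k, ENNReal.ofReal (‖x‖ ^ (-s)) ∂ν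
      ≤ ENNReal.ofReal ((R * 2⁻¹ ^ (k+1)) ^ (-s) * (R * 2⁻¹ ^ k) ^ n) * ν (ball 0 1) := by
    intro k
    have hmS : MeasurableSet (S k) :=
      ((isClosed_le continuous_const continuous_norm).measurableSet).inter measurableSet_ball
    calc ∫⁻ x in S k, ENNReal.ofReal (‖x‖ ^ (-s)) ∂ν
        ≤ ∫⁻ _x in S k, ENNReal.ofReal ((R * 2⁻¹ ^ (k+1)) ^ (-s)) ∂ν := by
          refine setLIntegral_mono measurable_const fun x hx => ?_
          exact ENNReal.ofReal_le_ofReal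
            (Real.rpow_le_rpow_of_nonpos (by positivity) hx.1 (neg_nonpos.2 hs0))
      _ = ENNReal.ofReal ((R * 2⁻¹ ^ (k+1)) ^ (-s)) * ν (S k) := by
          rw [setLIntegral_const]
      _ ≤ ENNReal.ofReal ((R * 2⁻¹ ^ (k+1)) ^ (-s)) * ν (ball 0 (R * 2⁻¹ ^ k)) :=
          mul_le_mul_right (measure_mono Set.inter_subset_right) _
      _ = ENNReal.ofReal ((R * 2⁻¹ ^ (k+1)) ^ (-s) * (R * 2⁻¹ ^ k) ^ n) * ν (ball 0 1) := by
          rw [hν, Measure.addHaar_ball _ _ (by positivity), finrank_euclideanSpace_fin,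
            ENNReal.ofReal_mul (by positivity), mul_assoc]
  have hρ : ENNReal.ofReal ((2:ℝ) ^ (s - (n:ℝ))) < 1 := by
    rw [ENNReal.ofReal_lt_one]
    exact Real.rpow_lt_one_of_one_lt_of_neg one_lt_two (by
      have : (1:ℝ) ≤ (n:ℝ) := by exact_mod_cast hn
      linarith)
  calc ∫⁻ x in ball (0:E) R, ENNReal.ofReal (‖x‖ ^ (-s)) ∂ν
      ≤ ∫⁻ x in ({0} ∪ ⋃ k, S k : Set E), ENNReal.ofReal (‖x‖ ^ (-s)) ∂ν :=
        lintegral_mono_set cover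
    _ ≤ ∫⁻ x in ({0} : Set E), ENNReal.ofReal (‖x‖ ^ (-s)) ∂ν
          + ∫⁻ x in (⋃ k, S k), ENNReal.ofReal (‖x‖ ^ (-s)) ∂ν := lintegral_union_le _ _ _
    _ ≤ 0 + ∑' k, ∫⁻ x in S k, ENNReal.ofReal (‖x‖ ^ (-s)) ∂ν := by
        gcongr
        · exact le_of_eq (setLIntegral_measure_zero _ _ hnull)
        · exact lintegral_iUnion_le _ _
    _ ≤ ∑' k, ENNReal.ofReal ((R * 2⁻¹ ^ (k+1)) ^ (-s) * (R * 2⁻¹ ^ k) ^ n) * ν (ball 0 1) := by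
        rw [zero_add]; exact ENNReal.tsum_le_tsum hSk
    _ = ∑' k, ENNReal.ofReal (R ^ (-s) * 2 ^ s * R ^ n) * ν (ball 0 1)
          * ENNReal.ofReal ((2:ℝ) ^ (s - (n:ℝ))) ^ k := by
        congr 1; funext k
        rw [pow_calc R s n k hR, ENNReal.ofReal_mul (by positivity), ← ENNReal.ofReal_pow (by positivity)]
        ring
    _ = ENNReal.ofReal (R ^ (-s) * 2 ^ s * R ^ n) * ν (ball 0 1)
          * ∑' k, ENNReal.ofReal ((2:ℝ) ^ (s - (n:ℝ))) ^ k := ENNReal.tsum_mul_left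
    _ < ⊤ := by
        apply ENNReal.mul_lt_top (ENNReal.mul_lt_top ENNReal.ofReal_lt_top measure_ball_lt_top)
        rw [ENNReal.tsum_geometric]
        exact ENNReal.inv_lt_top.2 (tsub_pos_of_lt hρ)

lemma kernel_bound {n : ℕ} (hn : 1 ≤ n) {s R : ℝ} (hs0 : 0 ≤ s) (hsn : s < n) (hR : 0 < R) :
    ∃ A : ℝ≥0∞, A < ⊤ ∧ ∀ y : EuclideanSpace ℝ (Fin n),
      ∫⁻ x in ball (0 : EuclideanSpace ℝ (Fin n)) R,
        ENNReal.ofReal (((1 + ‖y‖) / ‖x - y‖) ^ s) ≤ A := by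
  set E := EuclideanSpace ℝ (Fin n)
  set ν := (volume : Measure E) with hν
  set I := ∫⁻ x in ball (0:E) R, ENNReal.ofReal (‖x‖ ^ (-s)) with hI
  have hIfin : I < ⊤ := riesz hn hs0 hsn hR
  refine ⟨ENNReal.ofReal (2 ^ s) * (ENNReal.ofReal ((1+R) ^ s)
      * (ENNReal.ofReal (R ^ (-s)) * ν (ball 0 R) + I) + ν (ball (0:E) R)), ?_, ?_⟩
  · refine ENNReal.mul_lt_top ENNReal.ofReal_lt_top ?_
    refine ENNReal.add_lt_top.2 ⟨ENNReal.mul_lt_top ENNReal.ofReal_lt_top ?_, measure_ball_lt_top⟩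
    exact ENNReal.add_lt_top.2 ⟨ENNReal.mul_lt_top ENNReal.ofReal_lt_top measure_ball_lt_top, hIfin⟩
  intro y
  have hmeas : Measurable fun x : E => ENNReal.ofReal (‖x - y‖ ^ (-s)) :=
    (((continuous_id.sub continuous_const).norm).measurable.pow_const (-s)).ennreal_ofReal
  -- pointwise bound on the ball
  have hpt : ∀ x ∈ ball (0:E) R,
      ENNReal.ofReal (((1 + ‖y‖) / ‖x - y‖) ^ s)
        ≤ ENNReal.ofReal (2 ^ s) * (ENNReal.ofReal ((1+R) ^ s)
            * ENNReal.ofReal (‖x - y‖ ^ (-s)) + 1) := by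
    intro x hx
    set t := ‖x - y‖ with ht
    have ht0 : 0 ≤ t := norm_nonneg _
    have h1 : (1 + ‖y‖) / t ≤ (1 + R) / t + 1 := by
      rcases eq_or_lt_of_le ht0 with h | h
      · rw [← h]; simp [_root_.div_zero]
      · rw [div_add_one h.ne', div_le_div_iff₀ h h]
        have hyx : ‖y‖ ≤ ‖x‖ + t := by
          have := norm_sub_le x (x - y)
          simpa using this
        have hxR : ‖x‖ < R := mem_ball_zero_iff.1 hx
        nlinarith
    have h2 : ((1 + ‖y‖) / t) ^ s ≤ ((1 + R) / t + 1) ^ s :=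
      Real.rpow_le_rpow (by positivity) h1 hs0
    have h3 : ((1 + R) / t + 1) ^ s ≤ 2 ^ s * (((1 + R) / t) ^ s + 1) := by
      have hmax : (1 + R) / t + 1 ≤ 2 * max ((1 + R) / t) 1 := by
        have := le_max_left ((1 + R) / t) 1
        have := le_max_right ((1 + R) / t) 1
        linarith
      calc ((1 + R) / t + 1) ^ s ≤ (2 * max ((1 + R) / t) 1) ^ s :=
            Real.rpow_le_rpow (by positivity) hmax hs0
        _ = 2 ^ s * (max ((1 + R) / t) 1) ^ s :=
            Real.mul_rpow (by norm_num) (le_max_of_le_right zero_le_one)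
        _ ≤ 2 ^ s * (((1 + R) / t) ^ s + 1) := by
            have : (max ((1 + R) / t) 1) ^ s ≤ ((1 + R) / t) ^ s + 1 := by
              rcases max_cases ((1 + R) / t) 1 with ⟨he, _⟩ | ⟨he, _⟩
              · rw [he]; nlinarith [Real.rpow_nonneg (show (0:ℝ) ≤ (1+R)/t from by positivity) s]
              · rw [he, Real.one_rpow]
                nlinarith [Real.rpow_nonneg (show (0:ℝ) ≤ (1+R)/t from by positivity) s]
            nlinarith [Real.rpow_nonneg (le_of_lt two_pos) s]
    have h4 : ((1 + R) / t) ^ s = (1 + R) ^ s * t ^ (-s) := by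
      rw [Real.div_rpow (by positivity) ht0, Real.rpow_neg ht0, div_eq_mul_inv]
    have hreal : ((1 + ‖y‖) / t) ^ s ≤ 2 ^ s * ((1 + R) ^ s * t ^ (-s) + 1) := by
      rw [← h4]; linarith
    calc ENNReal.ofReal (((1 + ‖y‖) / t) ^ s)
        ≤ ENNReal.ofReal (2 ^ s * ((1 + R) ^ s * t ^ (-s) + 1)) := ENNReal.ofReal_le_ofReal hreal
      _ = ENNReal.ofReal (2 ^ s) * (ENNReal.ofReal ((1+R) ^ s)
            * ENNReal.ofReal (t ^ (-s)) + 1) := by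
          rw [ENNReal.ofReal_mul (by positivity), ENNReal.ofReal_add (by positivity) zero_le_one,
            ENNReal.ofReal_mul (by positivity), ENNReal.ofReal_one]
  -- translation bound
  have htrans : ∫⁻ x in ball (0:E) R, ENNReal.ofReal (‖x - y‖ ^ (-s)) ∂ν
      ≤ ENNReal.ofReal (R ^ (-s)) * ν (ball 0 R) + I := by
    have hpt2 : ∀ x : E, ENNReal.ofReal (‖x - y‖ ^ (-s))
        ≤ ENNReal.ofReal (R ^ (-s))
          + (ball y R).indicator (fun x => ENNReal.ofReal (‖x - y‖ ^ (-s))) x := by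
      intro x
      rcases lt_or_ge ‖x - y‖ R with h | h
      · have hxm : x ∈ ball y R := by rwa [mem_ball, dist_eq_norm]
        rw [Set.indicator_of_mem hxm]
        exact le_add_self
      · have hxm : x ∉ ball y R := by rw [mem_ball, dist_eq_norm]; exact not_lt.2 h
        rw [Set.indicator_of_notMem hxm, add_zero]
        exact ENNReal.ofReal_le_ofReal
          (Real.rpow_le_rpow_of_nonpos hR h (neg_nonpos.2 hs0))
    calc ∫⁻ x in ball (0:E) R, ENNReal.ofReal (‖x - y‖ ^ (-s)) ∂ν
        ≤ ∫⁻ x in ball (0:E) R, (ENNReal.ofReal (R ^ (-s))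
            + (ball y R).indicator (fun x => ENNReal.ofReal (‖x - y‖ ^ (-s))) x) ∂ν :=
          lintegral_mono fun x => hpt2 x
      _ = ENNReal.ofReal (R ^ (-s)) * ν (ball 0 R)
            + ∫⁻ x in ball (0:E) R,
                (ball y R).indicator (fun x => ENNReal.ofReal (‖x - y‖ ^ (-s))) x ∂ν := by
          rw [lintegral_add_left measurable_const, setLIntegral_const]
      _ ≤ ENNReal.ofReal (R ^ (-s)) * ν (ball 0 R)
            + ∫⁻ x, (ball y R).indicator (fun x => ENNReal.ofReal (‖x - y‖ ^ (-s))) x ∂ν := by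
          gcongr
          exact Measure.restrict_le_self
      _ = ENNReal.ofReal (R ^ (-s)) * ν (ball 0 R) + I := by
          congr 1
          have hind : ∀ x : E, (ball y R).indicator (fun x => ENNReal.ofReal (‖x - y‖ ^ (-s))) x
              = (ball (0:E) R).indicator (fun z => ENNReal.ofReal (‖z‖ ^ (-s))) (x + (-y)) := by
            intro x
            rcases lt_or_ge ‖x - y‖ R with h | h
            · rw [Set.indicator_of_mem (by rwa [mem_ball, dist_eq_norm]),
                Set.indicator_of_mem (by rw [mem_ball_zero_iff, ← sub_eq_add_neg]; exact h),
                ← sub_eq_add_neg]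
            · rw [Set.indicator_of_notMem (by rw [mem_ball, dist_eq_norm]; exact not_lt.2 h),
                Set.indicator_of_notMem (by rw [mem_ball_zero_iff, ← sub_eq_add_neg]; exact not_lt.2 h)]
          simp_rw [hind]
          rw [lintegral_add_right_eq_self
            (fun x => (ball (0:E) R).indicator (fun z => ENNReal.ofReal (‖z‖ ^ (-s))) x) (-y),
            lintegral_indicator measurableSet_ball _]
  -- combine
  calc ∫⁻ x in ball (0:E) R, ENNReal.ofReal (((1 + ‖y‖) / ‖x - y‖) ^ s) ∂ν
      ≤ ∫⁻ x in ball (0:E) R, ENNReal.ofReal (2 ^ s) * (ENNReal.ofReal ((1+R) ^ s)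
          * ENNReal.ofReal (‖x - y‖ ^ (-s)) + 1) ∂ν := by
        refine setLIntegral_mono (by fun_prop) hpt
    _ = ENNReal.ofReal (2 ^ s) * (ENNReal.ofReal ((1+R) ^ s)
          * ∫⁻ x in ball (0:E) R, ENNReal.ofReal (‖x - y‖ ^ (-s)) ∂ν + ν (ball (0:E) R)) := by
        rw [lintegral_const_mul _ (by fun_prop), lintegral_add_right _ measurable_const,
          lintegral_const_mul _ hmeas, setLIntegral_const, one_mul]
    _ ≤ _ := by gcongr

lemma jensen_pt {n : ℕ} (hn : 1 ≤ n) {g : EuclideanSpace ℝ (Fin n) → ℝ} (hgm : Measurable g)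
    (hgi : Integrable g) (hg0 : ∀ y, 0 ≤ g y) {M s : ℝ} (hM : M = ∫ y, g y) (hM0 : 0 < M)
    (hs0 : 0 ≤ s) (x : EuclideanSpace ℝ (Fin n)) :
    ENNReal.ofReal (Real.exp ((s / M) * ∫ y, Real.log ((1 + ‖y‖) / ‖x - y‖) * g y))
      ≤ max 1 ((ENNReal.ofReal M)⁻¹
          * ∫⁻ y, ENNReal.ofReal (((1 + ‖y‖) / ‖x - y‖) ^ s * g y)) := by
  have hne : Nonempty (Fin n) := ⟨⟨0, hn⟩⟩
  have hnt : Nontrivial (EuclideanSpace ℝ (Fin n)) := inferInstance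
  set K : EuclideanSpace ℝ (Fin n) → ℝ := fun y => (1 + ‖y‖) / ‖x - y‖ with hK
  set L : EuclideanSpace ℝ (Fin n) → ℝ := fun y => Real.log (K y) with hL
  by_cases hInt : Integrable (fun y => L y * g y)
  swap
  · rw [integral_undef hInt]
    simpa using le_max_left (1 : ℝ≥0∞) _
  by_cases hfin : (∫⁻ y, ENNReal.ofReal (K y ^ s * g y)) = ⊤
  · rw [hfin, ENNReal.mul_top (by simp [ENNReal.inv_ne_zero])]
    exact le_top.trans (le_max_right _ _)
  -- main case
  have hKm : Measurable K :=
    (continuous_const.add continuous_norm).measurable.div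
      ((continuous_const.sub continuous_id).norm.measurable)
  have hK0 : ∀ y, 0 ≤ K y := fun y => div_nonneg (by positivity) (norm_nonneg _)
  have hKsg_meas : Measurable fun y => K y ^ s * g y := (hKm.pow_const s).mul hgm
  have hKsg_nonneg : ∀ y, 0 ≤ K y ^ s * g y :=
    fun y => mul_nonneg (Real.rpow_nonneg (hK0 y) s) (hg0 y)
  have hKsg_int : Integrable (fun y => K y ^ s * g y) := by
    refine ⟨hKsg_meas.aestronglyMeasurable, ?_⟩
    rw [hasFiniteIntegral_iff_ofReal (Filter.Eventually.of_forall hKsg_nonneg)]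
    exact Ne.lt_top hfin
  set μ : Measure (EuclideanSpace ℝ (Fin n)) :=
    volume.withDensity fun y => ((g y).toNNReal : ℝ≥0∞) with hμ
  have hdm : Measurable fun y : EuclideanSpace ℝ (Fin n) => ((g y).toNNReal : ℝ≥0∞) :=
    hgm.real_toNNReal.coe_nnreal_ennreal
  have hμuniv : μ Set.univ = ENNReal.ofReal M := by
    rw [hμ, withDensity_apply _ MeasurableSet.univ, Measure.restrict_univ, hM]
    exact (ofReal_integral_eq_lintegral_ofReal hgi (Filter.Eventually.of_forall hg0)).symm
  haveI : IsFiniteMeasure μ := ⟨by rw [hμuniv]; exact ENNReal.ofReal_lt_top⟩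
  haveI : NeZero μ := ⟨fun h => (ENNReal.ofReal_pos.2 hM0).ne'
    (by rw [← hμuniv, h]; simp)⟩
  have havg : ∀ h : EuclideanSpace ℝ (Fin n) → ℝ, ∫ y, h y ∂μ = ∫ y, g y * h y := by
    intro h
    rw [hμ, integral_withDensity_eq_integral_smul hgm.real_toNNReal]
    congr 1
    funext y
    rw [NNReal.smul_def, Real.coe_toNNReal _ (hg0 y), smul_eq_mul]
  -- a.e. identification of exp (s * L) with K ^ s
  have hae : (fun y => K y ^ s * g y) =ᵐ[volume] fun y => Real.exp (s * L y) * g y := by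
    refine measure_mono_null (fun y hy => ?_) (measure_singleton x)
    simp only [Set.mem_compl_iff, Set.mem_setOf_eq] at hy
    by_contra hxy
    apply hy
    have hyx : x ≠ y := fun h => hxy (by simp [h.symm])
    have hKpos : 0 < K y :=
      div_pos (by positivity) (norm_pos_iff.2 (sub_ne_zero.2 hyx))
    rw [Real.rpow_def_of_pos hKpos, hL, mul_comm (Real.log (K y)) s]
  have htoR : ∀ y, ((((g y).toNNReal : ℝ≥0∞)).toReal) = g y := by
    intro y
    rw [ENNReal.coe_toReal, Real.coe_toNNReal _ (hg0 y)]
  -- integrability over μ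
  have hLint : Integrable (fun y => s * L y) μ := by
    rw [hμ, integrable_withDensity_iff hdm
      (Filter.Eventually.of_forall fun y => ENNReal.coe_lt_top)]
    have h1 : Integrable (fun y => s * (L y * g y)) := hInt.const_mul s
    refine h1.congr (Filter.Eventually.of_forall fun y => ?_)
    dsimp only
    rw [htoR y]
    ring
  have hexpint : Integrable (fun y => Real.exp (s * L y)) μ := by
    rw [hμ, integrable_withDensity_iff hdm
      (Filter.Eventually.of_forall fun y => ENNReal.coe_lt_top)]
    refine (hKsg_int.congr hae).congr (Filter.Eventually.of_forall fun y => ?_)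
    dsimp only
    rw [htoR y]
  -- Jensen
  have hjen : Real.exp (⨍ y, s * L y ∂μ) ≤ ⨍ y, Real.exp (s * L y) ∂μ := by
    have := convexOn_exp.map_average_le continuous_exp.continuousOn isClosed_univ
      (Filter.Eventually.of_forall fun y => Set.mem_univ (s * L y)) hLint
      (by exact hexpint)
    simpa using this
  have htoReal : (μ Set.univ).toReal = M := by
    rw [hμuniv, ENNReal.toReal_ofReal hM0.le]
  have havg1 : ⨍ y, s * L y ∂μ = (s / M) * ∫ y, L y * g y := by
    rw [average_eq, measureReal_def, htoReal, havg]
    simp_rw [show ∀ y, g y * (s * L y) = s * (L y * g y) from fun y => by ring]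
    rw [MeasureTheory.integral_const_mul, smul_eq_mul]
    ring
  have havg2 : ⨍ y, Real.exp (s * L y) ∂μ = M⁻¹ * ∫ y, K y ^ s * g y := by
    rw [average_eq, measureReal_def, htoReal, havg, smul_eq_mul]
    congr 1
    have h2 : (fun y => g y * Real.exp (s * L y)) = fun y => Real.exp (s * L y) * g y :=
      funext fun y => mul_comm _ _
    rw [h2]
    exact integral_congr_ae hae.symm
  calc ENNReal.ofReal (Real.exp ((s / M) * ∫ y, L y * g y))
      = ENNReal.ofReal (Real.exp (⨍ y, s * L y ∂μ)) := by rw [havg1]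
    _ ≤ ENNReal.ofReal (⨍ y, Real.exp (s * L y) ∂μ) := ENNReal.ofReal_le_ofReal hjen
    _ = ENNReal.ofReal (M⁻¹ * ∫ y, K y ^ s * g y) := by rw [havg2]
    _ = (ENNReal.ofReal M)⁻¹ * ∫⁻ y, ENNReal.ofReal (K y ^ s * g y) := by
        rw [ENNReal.ofReal_mul (inv_nonneg.2 hM0.le), ENNReal.ofReal_inv_of_pos hM0,
          ofReal_integral_eq_lintegral_ofReal hKsg_int (Filter.Eventually.of_forall hKsg_nonneg)]
    _ ≤ _ := le_max_right _ _

theorem stmt_7 (n : ℕ) (hn : 1 ≤ n) (γ ε : ℝ) (hγ : 0 < γ)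
    (f₂ : EuclideanSpace ℝ (Fin n) → ℝ) (hf₂ : Integrable f₂) (hf₂0 : ∀ y, 0 ≤ f₂ y)
    (hmass : ∫ y, f₂ y ≤ ε)
    (u₂ : EuclideanSpace ℝ (Fin n) → ℝ)
    (hu₂ : ∀ x, u₂ x = (1 / γ) * ∫ y, Real.log ((1 + ‖y‖) / ‖x - y‖) * f₂ y)
    (q : ℝ) (hq : 1 ≤ q) (hsub : q * n * (∫ y, f₂ y) / γ < n) (R : ℝ) (hR : 0 < R) :
    ∫⁻ x in ball (0 : EuclideanSpace ℝ (Fin n)) R,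
      ENNReal.ofReal (Real.exp ((n : ℝ) * q * u₂ x)) < ⊤ := by
  have hnty : Nonempty (Fin n) := ⟨⟨0, hn⟩⟩
  have hnt : Nontrivial (EuclideanSpace ℝ (Fin n)) := inferInstance
  have hsm := hf₂.1
  set g : EuclideanSpace ℝ (Fin n) → ℝ := fun y => max (hsm.mk f₂ y) 0 with hg
  have hgm : Measurable g := (hsm.stronglyMeasurable_mk.measurable).max measurable_const
  have hgeq : f₂ =ᵐ[volume] g := hsm.ae_eq_mk.mono fun y hy => by
    rw [hg]; dsimp only; rw [← hy, max_eq_left (hf₂0 y)]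
  have hgi : Integrable g := hf₂.congr hgeq
  have hg0 : ∀ y, 0 ≤ g y := fun y => le_max_right _ _
  have hMg : (∫ y, g y) = ∫ y, f₂ y := (integral_congr_ae hgeq).symm
  set M := ∫ y, f₂ y with hMdef
  have hM0 : 0 ≤ M := integral_nonneg hf₂0
  rcases eq_or_lt_of_le hM0 with hMz | hMpos
  · -- zero mass case
    have hzero : f₂ =ᵐ[volume] 0 := by
      rw [← integral_eq_zero_iff_of_nonneg hf₂0 hf₂]
      exact hMz.symm
    have hu0 : ∀ x, u₂ x = 0 := by
      intro x
      rw [hu₂ x]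
      have h0 : (fun y => Real.log ((1 + ‖y‖) / ‖x - y‖) * f₂ y) =ᵐ[volume] 0 :=
        hzero.mono fun y hy => by simp [hy]
      rw [integral_congr_ae h0]
      simp
    calc ∫⁻ x in ball (0 : EuclideanSpace ℝ (Fin n)) R,
          ENNReal.ofReal (Real.exp ((n : ℝ) * q * u₂ x))
        = ∫⁻ _x in ball (0 : EuclideanSpace ℝ (Fin n)) R, 1 := by
          simp_rw [hu0, mul_zero, Real.exp_zero, ENNReal.ofReal_one]
      _ = volume (ball (0 : EuclideanSpace ℝ (Fin n)) R) := setLIntegral_one _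
      _ < ⊤ := measure_ball_lt_top
  · -- positive mass
    set s := q * (n:ℝ) * M / γ with hs
    have hs0 : 0 ≤ s :=
      div_nonneg (mul_nonneg (mul_nonneg (zero_le_one.trans hq) (Nat.cast_nonneg n)) hM0) hγ.le
    have hsn : s < n := hsub
    obtain ⟨A, hAfin, hA⟩ := kernel_bound hn hs0 hsn hR
    have hMg' : M = ∫ y, g y := hMdef.trans hMg.symm
    have hpt : ∀ x : EuclideanSpace ℝ (Fin n), ENNReal.ofReal (Real.exp ((n : ℝ) * q * u₂ x))
        ≤ max 1 ((ENNReal.ofReal M)⁻¹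
            * ∫⁻ y, ENNReal.ofReal (((1 + ‖y‖) / ‖x - y‖) ^ s * g y)) := by
      intro x
      have hcong : (∫ y, Real.log ((1 + ‖y‖) / ‖x - y‖) * f₂ y)
          = ∫ y, Real.log ((1 + ‖y‖) / ‖x - y‖) * g y :=
        integral_congr_ae (hgeq.mono fun y hy => by dsimp only; rw [hy])
      have hexp : (n : ℝ) * q * u₂ x
          = (s / M) * ∫ y, Real.log ((1 + ‖y‖) / ‖x - y‖) * g y := by
        rw [hu₂ x, hcong]
        have hsM : s / M = (n : ℝ) * q * (1 / γ) := by
          rw [hs]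
          field_simp
        rw [hsM]
        ring
      rw [hexp]
      exact jensen_pt hn hgm hgi hg0 hMg' hMpos hs0 x
    have hmeasp : Measurable fun p : EuclideanSpace ℝ (Fin n) × EuclideanSpace ℝ (Fin n) =>
        ENNReal.ofReal (((1 + ‖p.2‖) / ‖p.1 - p.2‖) ^ s * g p.2) := by
      have m1 : Measurable fun p : EuclideanSpace ℝ (Fin n) × EuclideanSpace ℝ (Fin n) =>
          (1 + ‖p.2‖) / ‖p.1 - p.2‖ :=
        (measurable_const.add measurable_snd.norm).div ((measurable_fst.sub measurable_snd).norm)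
      exact ((m1.pow_const s).mul (hgm.comp measurable_snd)).ennreal_ofReal
    have hswap : (∫⁻ x in ball (0 : EuclideanSpace ℝ (Fin n)) R,
          ∫⁻ y, ENNReal.ofReal (((1 + ‖y‖) / ‖x - y‖) ^ s * g y))
        = ∫⁻ y, ∫⁻ x in ball (0 : EuclideanSpace ℝ (Fin n)) R,
            ENNReal.ofReal (((1 + ‖y‖) / ‖x - y‖) ^ s * g y) :=
      lintegral_lintegral_swap hmeasp.aemeasurable
    have hinner : ∀ y : EuclideanSpace ℝ (Fin n),
        (∫⁻ x in ball (0 : EuclideanSpace ℝ (Fin n)) R,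
          ENNReal.ofReal (((1 + ‖y‖) / ‖x - y‖) ^ s * g y)) ≤ A * ENNReal.ofReal (g y) := by
      intro y
      have hm2 : Measurable fun x : EuclideanSpace ℝ (Fin n) =>
          ENNReal.ofReal (((1 + ‖y‖) / ‖x - y‖) ^ s) := by
        have : Measurable fun x : EuclideanSpace ℝ (Fin n) => (1 + ‖y‖) / ‖x - y‖ :=
          measurable_const.div ((continuous_id.sub continuous_const).norm.measurable)
        exact (this.pow_const s).ennreal_ofReal
      calc (∫⁻ x in ball (0 : EuclideanSpace ℝ (Fin n)) R,
            ENNReal.ofReal (((1 + ‖y‖) / ‖x - y‖) ^ s * g y))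
          = (∫⁻ x in ball (0 : EuclideanSpace ℝ (Fin n)) R,
              ENNReal.ofReal (((1 + ‖y‖) / ‖x - y‖) ^ s)) * ENNReal.ofReal (g y) := by
            have hsp : ∀ x : EuclideanSpace ℝ (Fin n),
                ENNReal.ofReal (((1 + ‖y‖) / ‖x - y‖) ^ s * g y)
                  = ENNReal.ofReal (((1 + ‖y‖) / ‖x - y‖) ^ s) * ENNReal.ofReal (g y) :=
              fun x => ENNReal.ofReal_mul (Real.rpow_nonneg
                (div_nonneg (by positivity) (norm_nonneg _)) s)
            simp_rw [hsp]
            rw [lintegral_mul_const _ hm2]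
        _ ≤ A * ENNReal.ofReal (g y) := mul_le_mul_left (hA y) _
    have hMfin : ENNReal.ofReal M ≠ ⊤ := ENNReal.ofReal_ne_top
    calc ∫⁻ x in ball (0 : EuclideanSpace ℝ (Fin n)) R,
          ENNReal.ofReal (Real.exp ((n : ℝ) * q * u₂ x))
        ≤ ∫⁻ x in ball (0 : EuclideanSpace ℝ (Fin n)) R,
            (1 + (ENNReal.ofReal M)⁻¹
              * ∫⁻ y, ENNReal.ofReal (((1 + ‖y‖) / ‖x - y‖) ^ s * g y)) := by
          exact lintegral_mono fun x => (hpt x).trans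
            (max_le (le_add_right le_rfl) (le_add_left le_rfl))
      _ = volume (ball (0 : EuclideanSpace ℝ (Fin n)) R)
            + (ENNReal.ofReal M)⁻¹ * ∫⁻ x in ball (0 : EuclideanSpace ℝ (Fin n)) R,
                ∫⁻ y, ENNReal.ofReal (((1 + ‖y‖) / ‖x - y‖) ^ s * g y) := by
          rw [lintegral_add_left measurable_const, setLIntegral_one,
            lintegral_const_mul' _ _ (ENNReal.inv_ne_top.2 (by
              simpa using ENNReal.ofReal_pos.2 hMpos))]
      _ ≤ volume (ball (0 : EuclideanSpace ℝ (Fin n)) R)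
            + (ENNReal.ofReal M)⁻¹ * (A * ENNReal.ofReal M) := by
          gcongr
          rw [hswap]
          calc (∫⁻ y, ∫⁻ x in ball (0 : EuclideanSpace ℝ (Fin n)) R,
                ENNReal.ofReal (((1 + ‖y‖) / ‖x - y‖) ^ s * g y))
              ≤ ∫⁻ y, A * ENNReal.ofReal (g y) := lintegral_mono fun y => hinner y
            _ = A * ∫⁻ y, ENNReal.ofReal (g y) := lintegral_const_mul' _ _ hAfin.ne
            _ = A * ENNReal.ofReal M := by
                rw [← ofReal_integral_eq_lintegral_ofReal hgi
                  (Filter.Eventually.of_forall hg0), ← hMg']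
      _ < ⊤ := by
          refine ENNReal.add_lt_top.2 ⟨measure_ball_lt_top, ?_⟩
          exact ENNReal.mul_lt_top (ENNReal.inv_lt_top.2 (ENNReal.ofReal_pos.2 hMpos))
            (ENNReal.mul_lt_top hAfin ENNReal.ofReal_lt_top)
end

section
/- For every n ≥ 1 there exists C > 0 such that for all x ∈ ℝ^n, ∫_{ℝ^n} |log((1+|y|)/|x-y|)| e^{-|y|²} dy ≤ C log(2 + |x|). -/
open Real MeasureTheory Metric Set

lemma gauss_integrable (n : ℕ) {b : ℝ} (hb : 0 < b) :
    Integrable (fun v : EuclideanSpace ℝ (Fin n) ↦ Real.exp (-b * ‖v‖ ^ 2)) := by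
  have h := (GaussianFourier.integrable_cexp_neg_mul_sq_norm_add_of_euclideanSpace (ι := Fin n)
      (b := (b : ℂ)) (by simpa using hb) 0 0).norm
  have key : ∀ v : EuclideanSpace ℝ (Fin n),
      (-(b:ℂ) * (‖v‖:ℂ) ^ 2 + 0 * ((inner ℝ (0 : EuclideanSpace ℝ (Fin n)) v : ℝ) : ℂ))
        = ((-b * ‖v‖ ^ 2 : ℝ) : ℂ) := by
    intro v
    push_cast
    ring
  simpa [key, Complex.norm_exp, ← Complex.ofReal_pow, Complex.ofReal_re] using h

lemma integrableOn_abs_log_ball (n : ℕ) (hn : 1 ≤ n) :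
    IntegrableOn (fun z : EuclideanSpace ℝ (Fin n) ↦ |Real.log ‖z‖|) (ball 0 1) := by
  haveI : Nontrivial (EuclideanSpace ℝ (Fin n)) :=
    Module.nontrivial_of_finrank_pos (R := ℝ) (by rw [finrank_euclideanSpace_fin]; omega)
  have hmes : Measurable (fun z : EuclideanSpace ℝ (Fin n) ↦ |Real.log ‖z‖|) :=
    (Real.measurable_log.comp measurable_norm).abs
  refine ⟨hmes.aestronglyMeasurable.restrict, ?_⟩
  rw [hasFiniteIntegral_iff_norm]
  have hnn : 0 ≤ᵐ[volume.restrict (ball (0 : EuclideanSpace ℝ (Fin n)) 1)]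
      (fun z ↦ -Real.log ‖z‖) := by
    filter_upwards [ae_restrict_mem measurableSet_ball] with z hz
    have : ‖z‖ < 1 := by simpa [mem_ball, dist_eq_norm] using hz
    have h2 := Real.log_nonpos (norm_nonneg z) this.le
    simp only [Pi.zero_apply]
    linarith
  have key : ∫⁻ z in ball (0 : EuclideanSpace ℝ (Fin n)) 1,
      ENNReal.ofReal ‖|Real.log ‖z‖|‖
      = ∫⁻ t in Ioi (0:ℝ),
        (volume.restrict (ball (0 : EuclideanSpace ℝ (Fin n)) 1)) {z | t < -Real.log ‖z‖} := by
    rw [← lintegral_eq_lintegral_meas_lt _ hnn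
      (Real.measurable_log.comp measurable_norm).neg.aemeasurable]
    refine lintegral_congr_ae ?_
    filter_upwards [ae_restrict_mem measurableSet_ball] with z hz
    have h1 : ‖z‖ < 1 := by simpa [mem_ball, dist_eq_norm] using hz
    have h2 : Real.log ‖z‖ ≤ 0 := Real.log_nonpos (norm_nonneg z) h1.le
    rw [Real.norm_eq_abs, abs_abs, abs_of_nonpos h2]
  rw [key]
  have hV : volume (ball (0 : EuclideanSpace ℝ (Fin n)) 1) < ⊤ := measure_ball_lt_top
  have hbound : ∀ t ∈ Ioi (0:ℝ),
      (volume.restrict (ball (0 : EuclideanSpace ℝ (Fin n)) 1)) {z | t < -Real.log ‖z‖}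
        ≤ ENNReal.ofReal (Real.exp (-((n:ℝ) * t)))
            * volume (ball (0 : EuclideanSpace ℝ (Fin n)) 1) := by
    intro t ht
    have hsub : {z : EuclideanSpace ℝ (Fin n) | t < -Real.log ‖z‖}
        ⊆ ball 0 (Real.exp (-t)) := by
      intro z hz
      simp only [mem_setOf_eq] at hz
      have hlog : Real.log ‖z‖ < -t := by linarith
      rcases eq_or_lt_of_le (norm_nonneg z) with h | h
      · simp [mem_ball, dist_eq_norm, ← h, Real.exp_pos]
      · have : ‖z‖ = Real.exp (Real.log ‖z‖) := (Real.exp_log h).symm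
        rw [mem_ball, dist_eq_norm, sub_zero, this]
        exact Real.exp_lt_exp.2 hlog
    calc (volume.restrict (ball (0 : EuclideanSpace ℝ (Fin n)) 1))
          {z | t < -Real.log ‖z‖}
        ≤ volume {z : EuclideanSpace ℝ (Fin n) | t < -Real.log ‖z‖} :=
          Measure.restrict_le_self _
      _ ≤ volume (ball (0 : EuclideanSpace ℝ (Fin n)) (Real.exp (-t))) :=
          measure_mono hsub
      _ = ENNReal.ofReal (Real.exp (-t) ^ Module.finrank ℝ (EuclideanSpace ℝ (Fin n)))
            * volume (ball (0 : EuclideanSpace ℝ (Fin n)) 1) :=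
          Measure.addHaar_ball _ _ (Real.exp_pos _).le
      _ = ENNReal.ofReal (Real.exp (-((n:ℝ) * t)))
            * volume (ball (0 : EuclideanSpace ℝ (Fin n)) 1) := by
          rw [finrank_euclideanSpace_fin, ← Real.exp_nat_mul]
          ring_nf
  calc ∫⁻ t in Ioi (0:ℝ),
        (volume.restrict (ball (0 : EuclideanSpace ℝ (Fin n)) 1)) {z | t < -Real.log ‖z‖}
      ≤ ∫⁻ t in Ioi (0:ℝ), ENNReal.ofReal (Real.exp (-((n:ℝ) * t)))
          * volume (ball (0 : EuclideanSpace ℝ (Fin n)) 1) :=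
        setLIntegral_mono' measurableSet_Ioi hbound
    _ = (∫⁻ t in Ioi (0:ℝ), ENNReal.ofReal (Real.exp (-((n:ℝ) * t))))
          * volume (ball (0 : EuclideanSpace ℝ (Fin n)) 1) := by
        rw [lintegral_mul_const' _ _ hV.ne]
    _ < ⊤ := by
        refine ENNReal.mul_lt_top ?_ hV
        have hint : IntegrableOn (fun t : ℝ ↦ Real.exp (-(n:ℝ) * t)) (Ioi (0:ℝ)) :=
          exp_neg_integrableOn_Ioi 0 (by exact_mod_cast Nat.pos_of_ne_zero (by omega))
        have := hint.hasFiniteIntegral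
        rw [hasFiniteIntegral_iff_norm] at this
        simpa [neg_mul, Real.norm_eq_abs, abs_of_pos (Real.exp_pos _)] using this

lemma translate_log (n : ℕ) (hn : 1 ≤ n) (x : EuclideanSpace ℝ (Fin n)) :
    IntegrableOn (fun y : EuclideanSpace ℝ (Fin n) ↦ |Real.log ‖x - y‖|) (ball x 1) ∧
    ∫ y in ball x 1, |Real.log ‖x - y‖|
      = ∫ z in ball (0 : EuclideanSpace ℝ (Fin n)) 1, |Real.log ‖z‖| := by
  have hmp : MeasurePreserving (fun y : EuclideanSpace ℝ (Fin n) ↦ x - y) volume volume :=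
    Measure.measurePreserving_sub_left volume x
  have hemb : MeasurableEmbedding (fun y : EuclideanSpace ℝ (Fin n) ↦ x - y) :=
    (MeasurableEquiv.subLeft x).measurableEmbedding
  have hpre : (fun y : EuclideanSpace ℝ (Fin n) ↦ x - y) ⁻¹' (ball 0 1) = ball x 1 := by
    ext y
    simp [mem_ball, dist_eq_norm, norm_sub_rev]
  constructor
  · have := (hmp.integrableOn_comp_preimage hemb
      (s := ball 0 1)).2 (integrableOn_abs_log_ball n hn)
    rwa [hpre] at this
  · have := hmp.setIntegral_preimage_emb hemb
      (fun z : EuclideanSpace ℝ (Fin n) ↦ |Real.log ‖z‖|) (ball 0 1)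
    rw [hpre] at this
    exact this

theorem stmt_16 (n : ℕ) (hn : 1 ≤ n) :
    ∃ C > 0, ∀ x : EuclideanSpace ℝ (Fin n),
      ∫ y, |Real.log ((1 + ‖y‖) / ‖x - y‖)| * Real.exp (-‖y‖ ^ 2) ≤
        C * Real.log (2 + ‖x‖) := by
  set E := EuclideanSpace ℝ (Fin n)
  -- integrability of auxiliary functions
  have hA : Integrable (fun y : E ↦ Real.log (1 + ‖y‖) * Real.exp (-‖y‖ ^ 2)) := by
    refine (gauss_integrable n (b := (1:ℝ)/2) (by norm_num)).mono' ?_ ?_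
    · exact ((Real.measurable_log.comp (measurable_const.add measurable_norm)).mul
        (Real.measurable_exp.comp (measurable_norm.pow_const 2).neg)).aestronglyMeasurable
    · refine Filter.Eventually.of_forall fun y ↦ ?_
      have h0 : (0:ℝ) ≤ ‖y‖ := norm_nonneg y
      have hlog : Real.log (1 + ‖y‖) ≤ ‖y‖ := by
        have := Real.log_le_sub_one_of_pos (x := 1 + ‖y‖) (by linarith)
        linarith
      have hlognn : 0 ≤ Real.log (1 + ‖y‖) := Real.log_nonneg (by linarith)
      have hexp : ‖y‖ ≤ Real.exp ((1/2) * ‖y‖ ^ 2) := by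
        have h1 : (1/2 : ℝ) * ‖y‖ ^ 2 + 1 ≤ Real.exp ((1/2) * ‖y‖ ^ 2) :=
          Real.add_one_le_exp _
        nlinarith [sq_nonneg (‖y‖ - 1)]
      rw [Real.norm_eq_abs, abs_of_nonneg (by positivity)]
      calc Real.log (1 + ‖y‖) * Real.exp (-‖y‖ ^ 2)
          ≤ Real.exp ((1/2) * ‖y‖ ^ 2) * Real.exp (-‖y‖ ^ 2) := by
            have := (Real.exp_pos (-‖y‖ ^ 2)).le
            nlinarith
        _ = Real.exp (-(1/2) * ‖y‖ ^ 2) := by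
            rw [← Real.exp_add]; ring_nf
  have hγ : Integrable (fun y : E ↦ Real.exp (-‖y‖ ^ 2)) := by
    have := gauss_integrable n (b := (1:ℝ)) one_pos
    simpa using this
  -- constants
  set A := ∫ y : E, Real.log (1 + ‖y‖) * Real.exp (-‖y‖ ^ 2) with hAdef
  set γ := ∫ y : E, Real.exp (-‖y‖ ^ 2) with hγdef
  set K := ∫ z in ball (0 : E) 1, |Real.log ‖z‖| with hKdef
  have hA0 : 0 ≤ A := integral_nonneg fun y ↦ by
    have : 0 ≤ Real.log (1 + ‖y‖) := Real.log_nonneg (by linarith [norm_nonneg y])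
    positivity
  have hγ0 : 0 ≤ γ := integral_nonneg fun y ↦ (Real.exp_pos _).le
  have hK0 : 0 ≤ K := integral_nonneg fun z ↦ abs_nonneg _
  have hl2 : (0:ℝ) < Real.log 2 := Real.log_pos one_lt_two
  refine ⟨(2 * A + K) / Real.log 2 + γ + 1, ?_, ?_⟩
  · have : 0 ≤ (2 * A + K) / Real.log 2 := div_nonneg (by linarith) hl2.le
    linarith
  intro x
  have hLlog : Real.log 2 ≤ Real.log (2 + ‖x‖) := by
    apply Real.log_le_log two_pos
    linarith [norm_nonneg x]
  have hL0 : 0 ≤ Real.log (2 + ‖x‖) := le_trans hl2.le hLlog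
  obtain ⟨hIball, hIeq⟩ := translate_log n hn x
  -- the dominating function
  set G : E → ℝ := fun y ↦ 2 * (Real.log (1 + ‖y‖) * Real.exp (-‖y‖ ^ 2))
      + Real.log (2 + ‖x‖) * Real.exp (-‖y‖ ^ 2)
      + (ball x 1).indicator (fun y ↦ |Real.log ‖x - y‖|) y with hGdef
  have hGint : Integrable G :=
    ((hA.const_mul 2).add (hγ.const_mul (Real.log (2 + ‖x‖)))).add
      (hIball.integrable_indicator measurableSet_ball)
  -- pointwise bound
  have hmaster : ∀ y : E,
      |Real.log ((1 + ‖y‖) / ‖x - y‖)| * Real.exp (-‖y‖ ^ 2) ≤ G y := by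
    intro y
    have h0y : (0:ℝ) ≤ ‖y‖ := norm_nonneg y
    have he0 : (0:ℝ) < Real.exp (-‖y‖ ^ 2) := Real.exp_pos _
    have he1 : Real.exp (-‖y‖ ^ 2) ≤ 1 := Real.exp_le_one_iff.2 (neg_nonpos.2 (by positivity))
    have hlognn : 0 ≤ Real.log (1 + ‖y‖) := Real.log_nonneg (by linarith)
    have hInn : 0 ≤ (ball x 1).indicator (fun y ↦ |Real.log ‖x - y‖|) y :=
      Set.indicator_nonneg (fun _ _ ↦ abs_nonneg _) y
    rcases eq_or_lt_of_le (norm_nonneg (x - y)) with ht0 | ht0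
    · rw [hGdef]
      simp only [← ht0, div_zero, Real.log_zero, abs_zero, zero_mul]
      nlinarith
    · -- ‖x - y‖ > 0
      have h1 : |Real.log ((1 + ‖y‖) / ‖x - y‖)|
          ≤ Real.log (1 + ‖y‖) + |Real.log ‖x - y‖| := by
        rw [Real.log_div (by linarith) (ne_of_gt ht0), sub_eq_add_neg]
        calc |Real.log (1 + ‖y‖) + -Real.log ‖x - y‖|
            ≤ |Real.log (1 + ‖y‖)| + |(-Real.log ‖x - y‖)| := abs_add_le _ _
          _ = Real.log (1 + ‖y‖) + |Real.log ‖x - y‖| := by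
              rw [abs_neg, abs_of_nonneg hlognn]
      have h2 : |Real.log ‖x - y‖|
          ≤ (ball x 1).indicator (fun y ↦ |Real.log ‖x - y‖|) y
            + Real.log (2 + ‖x‖) + Real.log (1 + ‖y‖) := by
        by_cases hy : y ∈ ball x 1
        · rw [Set.indicator_of_mem hy]
          linarith
        · rw [Set.indicator_of_notMem hy]
          have ht1 : (1:ℝ) ≤ ‖x - y‖ := by
            by_contra h
            exact hy (by rw [mem_ball, dist_eq_norm, norm_sub_rev]; exact lt_of_not_ge h)
          rw [abs_of_nonneg (Real.log_nonneg ht1)]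
          have hle : ‖x - y‖ ≤ (2 + ‖x‖) * (1 + ‖y‖) := by
            have := norm_sub_le x y
            nlinarith [norm_nonneg x]
          have hlm : Real.log ((2 + ‖x‖) * (1 + ‖y‖))
              = Real.log (2 + ‖x‖) + Real.log (1 + ‖y‖) :=
            Real.log_mul (by positivity : (0:ℝ) < 2 + ‖x‖).ne'
              (by positivity : (0:ℝ) < 1 + ‖y‖).ne'
          have := (Real.log_le_log ht0 hle).trans_eq hlm
          linarith
      have habs : |Real.log ((1 + ‖y‖) / ‖x - y‖)|
          ≤ 2 * Real.log (1 + ‖y‖)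
            + (ball x 1).indicator (fun y ↦ |Real.log ‖x - y‖|) y
            + Real.log (2 + ‖x‖) := by linarith
      rw [hGdef]
      nlinarith [mul_le_mul_of_nonneg_right habs he0.le,
        mul_le_of_le_one_right hInn he1]
  -- integrability of the integrand
  have hFint : Integrable
      (fun y : E ↦ |Real.log ((1 + ‖y‖) / ‖x - y‖)| * Real.exp (-‖y‖ ^ 2)) := by
    refine hGint.mono' ?_ (Filter.Eventually.of_forall fun y ↦ ?_)
    · exact ((Real.measurable_log.comp
          ((measurable_const.add measurable_norm).div
            ((measurable_const.sub measurable_id).norm))).abs.mul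
        (Real.measurable_exp.comp (measurable_norm.pow_const 2).neg)).aestronglyMeasurable
    · rw [Real.norm_eq_abs, abs_of_nonneg (by positivity)]
      exact hmaster y
  -- compute the integral of G
  have hGval : ∫ y, G y
      = 2 * A + Real.log (2 + ‖x‖) * γ + K := by
    have h12 : Integrable (fun y : E ↦ 2 * (Real.log (1 + ‖y‖) * Real.exp (-‖y‖ ^ 2))
        + Real.log (2 + ‖x‖) * Real.exp (-‖y‖ ^ 2)) :=
      (hA.const_mul 2).add (hγ.const_mul (Real.log (2 + ‖x‖)))
    have hind : Integrable (fun y : E ↦ (ball x 1).indicator (fun y ↦ |Real.log ‖x - y‖|) y) :=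
      hIball.integrable_indicator measurableSet_ball
    have e1 : (∫ y, G y)
        = (∫ y : E, (2 * (Real.log (1 + ‖y‖) * Real.exp (-‖y‖ ^ 2))
            + Real.log (2 + ‖x‖) * Real.exp (-‖y‖ ^ 2)))
          + ∫ y : E, (ball x 1).indicator (fun y ↦ |Real.log ‖x - y‖|) y :=
      integral_add h12 hind
    have e2 : (∫ y : E, (2 * (Real.log (1 + ‖y‖) * Real.exp (-‖y‖ ^ 2))
            + Real.log (2 + ‖x‖) * Real.exp (-‖y‖ ^ 2)))
        = (∫ y : E, 2 * (Real.log (1 + ‖y‖) * Real.exp (-‖y‖ ^ 2)))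
          + ∫ y : E, Real.log (2 + ‖x‖) * Real.exp (-‖y‖ ^ 2) :=
      integral_add (hA.const_mul 2) (hγ.const_mul (Real.log (2 + ‖x‖)))
    rw [e1, e2, integral_const_mul, integral_const_mul,
      integral_indicator measurableSet_ball, hIeq]
  have hle : ∫ y, |Real.log ((1 + ‖y‖) / ‖x - y‖)| * Real.exp (-‖y‖ ^ 2)
      ≤ 2 * A + Real.log (2 + ‖x‖) * γ + K := by
    rw [← hGval]
    exact integral_mono hFint hGint hmaster
  refine hle.trans ?_
  have hdiv : 2 * A + K ≤ (2 * A + K) / Real.log 2 * Real.log (2 + ‖x‖) := by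
    rw [div_mul_eq_mul_div, le_div_iff₀ hl2]
    nlinarith
  nlinarith
end

section
/- Let u : ℝ^n → ℝ be measurable, α > -1, Λ := ∫_{ℝ^n} |x|^{nα} e^{nu} dx < ∞, and suppose u(y) ≥ r^s for all y ∈ B_{r^{2-n}}(x_r) with |x_r| = r, for all r ≥ R, where s > 0 and n ≥ 3. Then ∫_R^∞ r^{nα} e^{n r^s} r^{-(n-2)(n-1)} dr ≤ C Λ < ∞, which is impossible; hence no such family (x_r) exists. -/
open Real MeasureTheory Metric

theorem stmt_17 (n : ℕ) (hn : 3 ≤ n) (α s R : ℝ) (hα : -1 < α) (hs : 0 < s)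
    (hR : 1 ≤ R)
    (u : EuclideanSpace ℝ (Fin n) → ℝ) (hu : Measurable u)
    (hint : Integrable (fun x => ‖x‖ ^ ((n : ℝ) * α) * Real.exp ((n : ℝ) * u x)))
    (xr : ℝ → EuclideanSpace ℝ (Fin n))
    (hxr : ∀ r, R ≤ r → ‖xr r‖ = r)
    (hlow : ∀ r, R ≤ r → ∀ y ∈ ball (xr r) (r ^ ((2 : ℝ) - n)), r ^ s ≤ u y) :
    False := by
  have hn3 : (3:ℝ) ≤ (n:ℝ) := by exact_mod_cast hn
  have hn1 : (1:ℝ) ≤ (n:ℝ) := by linarith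
  set A : ℝ := (n:ℝ) * α with hA
  set f : EuclideanSpace ℝ (Fin n) → ℝ :=
    fun x => ‖x‖ ^ A * Real.exp ((n:ℝ) * u x) with hf
  have hfnn : ∀ x, 0 ≤ f x := fun x =>
    mul_nonneg (Real.rpow_nonneg (norm_nonneg _) _) (Real.exp_pos _).le
  set Λ := ∫ x, f x with hΛ
  set V := (volume (ball (0 : EuclideanSpace ℝ (Fin n)) 1)).toReal with hV
  have hVpos : 0 < V := by
    refine ENNReal.toReal_pos ?_ ?_
    · exact (measure_ball_pos volume _ one_pos).ne'
    · exact measure_ball_lt_top.ne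
  haveI : Nontrivial (EuclideanSpace ℝ (Fin n)) := by
    haveI : Inhabited (Fin n) := ⟨⟨0, by omega⟩⟩
    exact inferInstance
  set c : ℝ := |A| + ((n:ℝ) - 2) * n with hc
  set K : ℝ := V * (2:ℝ) ^ (-|A|) with hK
  have hKpos : 0 < K := mul_pos hVpos (Real.rpow_pos_of_pos two_pos _)
  have key : ∀ r : ℝ, R + 1 ≤ r →
      K * r ^ (-c) * Real.exp ((n:ℝ) * r ^ s) ≤ Λ := by
    intro r hr
    have hrR : R ≤ r := by linarith
    have hr1 : (1:ℝ) ≤ r := by linarith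
    have hr0 : (0:ℝ) < r := by linarith
    set ρ : ℝ := r ^ ((2:ℝ) - n) with hρ
    have hρpos : 0 < ρ := Real.rpow_pos_of_pos hr0 _
    have hρle : ρ ≤ 1 := Real.rpow_le_one_of_one_le_of_nonpos hr1 (by linarith)
    set B := ball (xr r) ρ with hB
    have hpt : ∀ y ∈ B, (2*r) ^ (-|A|) * Real.exp ((n:ℝ) * r ^ s) ≤ f y := by
      intro y hy
      have hdist : dist y (xr r) < ρ := mem_ball.mp hy
      have hd : ‖y - xr r‖ < ρ := by rwa [← dist_eq_norm]
      have hny : r - 1 ≤ ‖y‖ := by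
        have h1 := norm_sub_norm_le (xr r) y
        rw [hxr r hrR] at h1
        have : ‖xr r - y‖ = ‖y - xr r‖ := norm_sub_rev _ _
        linarith
      have hny1 : (1:ℝ) ≤ ‖y‖ := by linarith
      have hny2 : ‖y‖ ≤ 2 * r := by
        have h1 := norm_sub_norm_le y (xr r)
        rw [hxr r hrR] at h1
        linarith
      have hypos : (0:ℝ) < ‖y‖ := by linarith
      have hnorm : (2*r) ^ (-|A|) ≤ ‖y‖ ^ A := by
        rcases le_or_gt 0 A with hA0 | hA0
        · have e1 : (2*r) ^ (-|A|) ≤ 1 :=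
            Real.rpow_le_one_of_one_le_of_nonpos (by linarith) (neg_nonpos.mpr (abs_nonneg A))
          have e2 : (1:ℝ) ≤ ‖y‖ ^ A := by
            calc (1:ℝ) = (1:ℝ) ^ A := (Real.one_rpow A).symm
            _ ≤ ‖y‖ ^ A := Real.rpow_le_rpow zero_le_one hny1 hA0
          linarith
        · have : -|A| = A := by rw [abs_of_neg hA0]; ring
          rw [this]
          exact Real.rpow_le_rpow_of_nonpos hypos hny2 hA0.le
      have hexp : Real.exp ((n:ℝ) * r ^ s) ≤ Real.exp ((n:ℝ) * u y) :=
        Real.exp_le_exp.mpr (mul_le_mul_of_nonneg_left (hlow r hrR y hy) (by linarith))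
      exact mul_le_mul hnorm hexp (Real.exp_pos _).le (Real.rpow_nonneg hypos.le _)
    have hmeasB : MeasurableSet B := measurableSet_ball
    have hvolB : (volume B).toReal = ρ ^ n * V := by
      rw [hB, Measure.addHaar_ball volume (xr r) hρpos.le, ENNReal.toReal_mul,
        ENNReal.toReal_ofReal (by positivity), finrank_euclideanSpace, Fintype.card_fin]
    have h1 : ((2*r) ^ (-|A|) * Real.exp ((n:ℝ) * r ^ s)) * (ρ ^ n * V)
        ≤ ∫ y in B, f y := by
      have hconst : IntegrableOn (fun _ => (2*r) ^ (-|A|) * Real.exp ((n:ℝ) * r ^ s)) B volume :=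
        integrableOn_const measure_ball_lt_top.ne
      have := setIntegral_mono_on hconst hint.integrableOn hmeasB hpt
      rwa [setIntegral_const, smul_eq_mul, measureReal_def, hvolB, mul_comm] at this
    have h2 : ∫ y in B, f y ≤ Λ :=
      setIntegral_le_integral hint (Filter.Eventually.of_forall hfnn)
    have hρn : ρ ^ n = r ^ (((2:ℝ) - n) * n) := by
      rw [hρ, ← Real.rpow_natCast (r ^ ((2:ℝ) - n)) n, ← Real.rpow_mul hr0.le]
    have heq : K * r ^ (-c) * Real.exp ((n:ℝ) * r ^ s)
        = ((2*r) ^ (-|A|) * Real.exp ((n:ℝ) * r ^ s)) * (ρ ^ n * V) := by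
      rw [hρn, Real.mul_rpow two_pos.le hr0.le]
      have : r ^ (-c) = r ^ (-|A|) * r ^ (((2:ℝ) - n) * n) := by
        rw [← Real.rpow_add hr0]; congr 1; rw [hc]; ring
      rw [this, hK]; ring
    rw [heq]; exact le_trans h1 h2
  obtain ⟨m, hm⟩ := exists_nat_gt (c / s)
  have hcm : c < s * m := by
    have := (div_lt_iff₀ hs).mp hm; linarith
  set d : ℝ := s * m - c with hd
  have hdpos : 0 < d := by rw [hd]; linarith
  set K' : ℝ := K / (m.factorial : ℝ) with hK'
  have hK'pos : 0 < K' := div_pos hKpos (by positivity)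
  have key2 : ∀ r : ℝ, R + 1 ≤ r → K' * r ^ d ≤ Λ := by
    intro r hr
    have hr0 : (0:ℝ) < r := by linarith
    have hrs : (0:ℝ) ≤ r ^ s := Real.rpow_nonneg hr0.le s
    have hx0 : (0:ℝ) ≤ (n:ℝ) * r ^ s := by positivity
    have hexp : ((n:ℝ) * r ^ s) ^ m / (m.factorial : ℝ) ≤ Real.exp ((n:ℝ) * r ^ s) := by
      have hsum := Real.sum_le_exp_of_nonneg hx0 (m+1)
      have hsingle : ((n:ℝ) * r ^ s) ^ m / (m.factorial : ℝ)
          ≤ ∑ i ∈ Finset.range (m+1), ((n:ℝ) * r ^ s) ^ i / (i.factorial : ℝ) := by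
        refine Finset.single_le_sum (f := fun i => ((n:ℝ) * r ^ s) ^ i / (i.factorial : ℝ))
          (fun i _ => by positivity) (Finset.self_mem_range_succ m)
      exact le_trans hsingle hsum
    have hpow : (r ^ s) ^ m ≤ ((n:ℝ) * r ^ s) ^ m :=
      pow_le_pow_left₀ hrs (le_mul_of_one_le_left hrs hn1) m
    have hrsm : (r ^ s) ^ m = r ^ (s * m) := by
      rw [← Real.rpow_natCast (r ^ s) m, ← Real.rpow_mul hr0.le]
    have hexp2 : r ^ (s * (m:ℝ)) / (m.factorial : ℝ) ≤ Real.exp ((n:ℝ) * r ^ s) := by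
      rw [← hrsm]
      refine le_trans ?_ hexp
      gcongr
    have heq : K' * r ^ d = K * r ^ (-c) * (r ^ (s * (m:ℝ)) / (m.factorial : ℝ)) := by
      have hrd : r ^ d = r ^ (s * (m:ℝ)) * r ^ (-c) := by
        rw [hd, sub_eq_add_neg, add_comm, Real.rpow_add hr0, mul_comm]
      rw [hK', hrd]; ring
    calc K' * r ^ d = K * r ^ (-c) * (r ^ (s * (m:ℝ)) / (m.factorial : ℝ)) := heq
      _ ≤ K * r ^ (-c) * Real.exp ((n:ℝ) * r ^ s) := by
          refine mul_le_mul_of_nonneg_left hexp2 ?_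
          have : (0:ℝ) ≤ r ^ (-c) := Real.rpow_nonneg hr0.le _
          positivity
      _ ≤ Λ := key r hr
  have hev : ∀ᶠ r : ℝ in Filter.atTop, Λ / K' < r ^ d ∧ R + 1 ≤ r :=
    ((tendsto_rpow_atTop hdpos).eventually_gt_atTop (Λ / K')).and
      (Filter.eventually_ge_atTop (R + 1))
  obtain ⟨r₀, hr₀1, hr₀2⟩ := hev.exists
  have hlt : Λ < K' * r₀ ^ d := by
    have := (div_lt_iff₀ hK'pos).mp hr₀1
    linarith
  exact absurd (key2 r₀ hr₀2) (not_le.mpr hlt)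
end

section
/- Let f ∈ L¹(ℝ^n) be nonnegative with total mass m := ‖f‖_{L¹}, let γ > 0, q ≥ 1, ε₂ > 0 be such that q m / γ ≤ ε₂ < n. Then for every ball B_ρ(x) with 0 < ρ ≤ 1, ∫_{B_ρ(x)} exp( (q/γ) ∫_{ℝ^n} log(1/|z-y|) 1_{|z-y|≤1} f(y) dy ) dz ≤ C(n, ε₂) ρ^{n - ε₂}. -/
open Real MeasureTheory Metric ENNReal

noncomputable def Jgeo (n : ℕ) (ε₂ : ℝ) : ℝ≥0∞ :=
  ∑' k : ℕ, (ENNReal.ofReal ((2:ℝ) ^ (ε₂ - (n:ℝ))))^k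

lemma Jgeo_lt_top (n : ℕ) (ε₂ : ℝ) (hε₂n : ε₂ < n) : Jgeo n ε₂ < ⊤ := by
  rw [Jgeo, ENNReal.tsum_geometric]
  have h1 : (2:ℝ) ^ (ε₂ - (n:ℝ)) < 1 :=
    Real.rpow_lt_one_of_one_lt_of_neg one_lt_two (by linarith)
  have : ENNReal.ofReal ((2:ℝ) ^ (ε₂ - (n:ℝ))) < 1 := by
    rw [← ENNReal.ofReal_one]
    exact ENNReal.ofReal_lt_ofReal_iff one_pos |>.mpr h1
  exact ENNReal.inv_lt_top.mpr (tsub_pos_of_lt this)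

lemma pos_log_eq (a b : ℝ) (ha : 0 < a) (hb : 0 < b) (h : Real.log a = Real.log b) : a = b := by
  rw [← Real.exp_log ha, ← Real.exp_log hb, h]

lemma key_arith (ρ ε₂ : ℝ) (hρ : 0 < ρ) (n k : ℕ) :
    (ρ * (2⁻¹:ℝ)^(k+1)) ^ (-ε₂) * (ρ * (2⁻¹:ℝ)^k) ^ (n:ℕ)
      = ρ ^ ((n:ℝ) - ε₂) * ((2:ℝ) ^ ε₂ * ((2:ℝ) ^ (ε₂ - (n:ℝ))) ^ k) := by
  have l1 : (0:ℝ) < ρ * (2⁻¹:ℝ)^(k+1) := by positivity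
  have l2 : (0:ℝ) < ρ * (2⁻¹:ℝ)^k := by positivity
  apply pos_log_eq
  · positivity
  · positivity
  rw [Real.log_mul (by positivity) (by positivity),
      Real.log_mul (by positivity) (by positivity),
      Real.log_rpow l1, Real.log_pow, Real.log_mul hρ.ne' (by positivity),
      Real.log_mul hρ.ne' (by positivity), Real.log_rpow hρ,
      Real.log_mul (by positivity) (by positivity), Real.log_pow, Real.log_pow, Real.log_pow,
      Real.log_rpow two_pos, Real.log_rpow two_pos, Real.log_inv]
  push_cast
  ring

lemma aux_ball (n : ℕ) (hn : 1 ≤ n) {ε₂ : ℝ} (hε₂ : 0 < ε₂) (hε₂n : ε₂ < n) {ρ : ℝ}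
    (hρ : 0 < ρ) :
    ∫⁻ z in ball (0 : EuclideanSpace ℝ (Fin n)) ρ, ENNReal.ofReal (‖z‖ ^ (-ε₂)) ≤
      ENNReal.ofReal (ρ ^ ((n:ℝ) - ε₂)) * (ENNReal.ofReal ((2:ℝ) ^ ε₂) * Jgeo n ε₂ *
        volume (ball (0 : EuclideanSpace ℝ (Fin n)) 1)) := by
  classical
  set E := EuclideanSpace ℝ (Fin n)
  have hnt : Nontrivial E := by
    refine ⟨EuclideanSpace.single ⟨0, hn⟩ 1, 0, fun h => ?_⟩
    have := congrArg (fun v : EuclideanSpace ℝ (Fin n) => v ⟨0, hn⟩) h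
    simp at this
  set A : ℕ → Set E := fun k => ball 0 (ρ * (2⁻¹:ℝ)^k) \ ball 0 (ρ * (2⁻¹:ℝ)^(k+1)) with hA
  have hcover : ball (0:E) ρ ⊆ {0} ∪ ⋃ k, A k := by
    intro z hz
    rcases eq_or_ne z 0 with rfl | hz0
    · exact Or.inl rfl
    right
    have hz' : 0 < ‖z‖ := norm_pos_iff.mpr hz0
    have hzρ : ‖z‖ < ρ := by simpa [mem_ball, dist_eq_norm] using hz
    have hex : ∃ j : ℕ, ρ * (2⁻¹:ℝ)^(j+1) ≤ ‖z‖ := by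
      obtain ⟨j, hj⟩ := exists_pow_lt_of_lt_one (div_pos hz' hρ) (by norm_num : (2⁻¹:ℝ) < 1)
      refine ⟨j, ?_⟩
      have : (2⁻¹:ℝ)^(j+1) ≤ (2⁻¹:ℝ)^j :=
        pow_le_pow_of_le_one (by norm_num) (by norm_num) (Nat.le_succ j)
      have h2 : (2⁻¹:ℝ)^j * ρ < ‖z‖ := (lt_div_iff₀ hρ).mp hj
      nlinarith [mul_le_mul_of_nonneg_left this hρ.le]
    set k := Nat.find hex with hk
    have hk1 : ρ * (2⁻¹:ℝ)^(k+1) ≤ ‖z‖ := Nat.find_spec hex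
    have hk2 : ‖z‖ < ρ * (2⁻¹:ℝ)^k := by
      rcases Nat.eq_zero_or_pos k with h0 | hpos
      · rw [h0]; simpa using hzρ
      · have := Nat.find_min hex (m := k - 1) (by omega)
        push_neg at this
        have hkk : k - 1 + 1 = k := by omega
        rwa [hkk] at this
    refine Set.mem_iUnion.mpr ⟨k, ?_, ?_⟩
    · simpa [mem_ball, dist_eq_norm] using hk2
    · simpa [mem_ball, dist_eq_norm] using not_lt.mpr hk1
  calc ∫⁻ z in ball (0:E) ρ, ENNReal.ofReal (‖z‖ ^ (-ε₂))
      ≤ ∫⁻ z in ({0} ∪ ⋃ k, A k : Set E), ENNReal.ofReal (‖z‖ ^ (-ε₂)) :=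
        lintegral_mono_set hcover
    _ ≤ (∫⁻ z in ({0} : Set E), ENNReal.ofReal (‖z‖ ^ (-ε₂))) +
        ∫⁻ z in (⋃ k, A k), ENNReal.ofReal (‖z‖ ^ (-ε₂)) := lintegral_union_le _ _ _
    _ = ∫⁻ z in (⋃ k, A k), ENNReal.ofReal (‖z‖ ^ (-ε₂)) := by
        rw [setLIntegral_measure_zero _ _ (measure_singleton (μ := (volume : Measure (EuclideanSpace ℝ (Fin n)))) 0), zero_add]
    _ ≤ ∑' k, ∫⁻ z in A k, ENNReal.ofReal (‖z‖ ^ (-ε₂)) := lintegral_iUnion_le _ _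
    _ ≤ ∑' k, ENNReal.ofReal (ρ ^ ((n:ℝ) - ε₂)) * ENNReal.ofReal ((2:ℝ) ^ ε₂) *
          (ENNReal.ofReal ((2:ℝ) ^ (ε₂ - (n:ℝ))))^k * volume (ball (0:E) 1) := by
        refine ENNReal.tsum_le_tsum fun k => ?_
        have hrk : (0:ℝ) < ρ * (2⁻¹:ℝ)^(k+1) := by positivity
        have hb : ∀ z ∈ A k, ENNReal.ofReal (‖z‖ ^ (-ε₂)) ≤
            ENNReal.ofReal ((ρ * (2⁻¹:ℝ)^(k+1)) ^ (-ε₂)) := by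
          intro z hz
          apply ENNReal.ofReal_le_ofReal
          have hzlb : ρ * (2⁻¹:ℝ)^(k+1) ≤ ‖z‖ := by
            have := hz.2
            simpa [mem_ball, dist_eq_norm, not_lt] using this
          exact Real.rpow_le_rpow_of_nonpos hrk hzlb (neg_nonpos.mpr hε₂.le)
        calc ∫⁻ z in A k, ENNReal.ofReal (‖z‖ ^ (-ε₂))
            ≤ ∫⁻ _ in A k, ENNReal.ofReal ((ρ * (2⁻¹:ℝ)^(k+1)) ^ (-ε₂)) :=
              setLIntegral_mono measurable_const hb
          _ = ENNReal.ofReal ((ρ * (2⁻¹:ℝ)^(k+1)) ^ (-ε₂)) * volume (A k) :=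
              setLIntegral_const _ _
          _ ≤ ENNReal.ofReal ((ρ * (2⁻¹:ℝ)^(k+1)) ^ (-ε₂)) *
                volume (ball (0:E) (ρ * (2⁻¹:ℝ)^k)) := by
              gcongr
              exact Set.diff_subset
          _ = ENNReal.ofReal ((ρ * (2⁻¹:ℝ)^(k+1)) ^ (-ε₂)) *
                (ENNReal.ofReal ((ρ * (2⁻¹:ℝ)^k) ^ (n:ℕ)) * volume (ball (0:E) 1)) := by
              rw [Measure.addHaar_ball _ _ (by positivity),
                show Module.finrank ℝ E = n from finrank_euclideanSpace_fin]
          _ = ENNReal.ofReal (ρ ^ ((n:ℝ) - ε₂)) * ENNReal.ofReal ((2:ℝ) ^ ε₂) *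
                (ENNReal.ofReal ((2:ℝ) ^ (ε₂ - (n:ℝ))))^k * volume (ball (0:E) 1) := by
              rw [← mul_assoc, ← ENNReal.ofReal_mul (by positivity), key_arith ρ ε₂ hρ n k,
                ← ENNReal.ofReal_pow (by positivity), ← ENNReal.ofReal_mul (by positivity),
                ← ENNReal.ofReal_mul (by positivity), mul_assoc]
    _ = ENNReal.ofReal (ρ ^ ((n:ℝ) - ε₂)) * (ENNReal.ofReal ((2:ℝ) ^ ε₂) * Jgeo n ε₂ *
          volume (ball (0:E) 1)) := by
        rw [Jgeo]
        rw [ENNReal.tsum_mul_right]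
        rw [ENNReal.tsum_mul_left]
        ring

noncomputable def Kconst (n : ℕ) (ε₂ : ℝ) : ℝ≥0∞ :=
  ENNReal.ofReal ((2:ℝ) ^ ε₂) * Jgeo n ε₂ * volume (ball (0 : EuclideanSpace ℝ (Fin n)) 1)
    + volume (ball (0 : EuclideanSpace ℝ (Fin n)) 1)

lemma Kconst_lt_top (n : ℕ) (ε₂ : ℝ) (hε₂n : ε₂ < n) : Kconst n ε₂ < ⊤ := by
  have hV : volume (ball (0 : EuclideanSpace ℝ (Fin n)) 1) < ⊤ := measure_ball_lt_top
  have hJ := Jgeo_lt_top n ε₂ hε₂n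
  rw [Kconst]
  exact ENNReal.add_lt_top.mpr ⟨ENNReal.mul_lt_top (ENNReal.mul_lt_top ENNReal.ofReal_lt_top hJ) hV, hV⟩

lemma Kconst_pos (n : ℕ) (ε₂ : ℝ) : 0 < Kconst n ε₂ := by
  have hV : 0 < volume (ball (0 : EuclideanSpace ℝ (Fin n)) 1) :=
    measure_ball_pos _ _ one_pos
  rw [Kconst]
  exact lt_of_lt_of_le hV le_add_self

lemma rpow_meas {n : ℕ} (ε₂ : ℝ) (y : EuclideanSpace ℝ (Fin n)) :
    Measurable (fun z : EuclideanSpace ℝ (Fin n) => ENNReal.ofReal (‖z - y‖ ^ (-ε₂))) :=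
  ENNReal.measurable_ofReal.comp
    ((measurable_norm.comp (measurable_id.sub_const y)).pow_const _)

lemma aux_ball2 (n : ℕ) (hn : 1 ≤ n) {ε₂ : ℝ} (hε₂ : 0 < ε₂) (hε₂n : ε₂ < n) {ρ : ℝ}
    (hρ : 0 < ρ) (hρ1 : ρ ≤ 1) (x y : EuclideanSpace ℝ (Fin n)) :
    ∫⁻ z in ball x ρ, ENNReal.ofReal (max 1 (‖z - y‖ ^ (-ε₂))) ≤
      ENNReal.ofReal (ρ ^ ((n:ℝ) - ε₂)) * Kconst n ε₂ := by
  classical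
  let E := EuclideanSpace ℝ (Fin n)
  have hnt : Nontrivial E := by
    refine ⟨EuclideanSpace.single ⟨0, hn⟩ 1, 0, fun h => ?_⟩
    have := congrArg (fun v : EuclideanSpace ℝ (Fin n) => v ⟨0, hn⟩) h
    simp at this
  set V := volume (ball (0:E) 1) with hV
  have hρε : (1:ℝ) ≤ ρ ^ (-ε₂) :=
    Real.one_le_rpow_of_pos_of_le_one_of_nonpos hρ hρ1 (neg_nonpos.mpr hε₂.le)
  have hpt : ∀ z ∈ ball x ρ, ENNReal.ofReal (max 1 (‖z - y‖ ^ (-ε₂))) ≤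
      ENNReal.ofReal (ρ ^ (-ε₂)) +
        (ball y ρ).indicator (fun z => ENNReal.ofReal (‖z - y‖ ^ (-ε₂))) z := by
    intro z _
    by_cases hz : z ∈ ball y ρ
    · rw [Set.indicator_of_mem hz]
      rw [← ENNReal.ofReal_add (by positivity) (by positivity)]
      apply ENNReal.ofReal_le_ofReal
      apply max_le <;> nlinarith [Real.rpow_nonneg (norm_nonneg (z-y)) (-ε₂)]
    · rw [Set.indicator_of_notMem hz, add_zero]
      apply ENNReal.ofReal_le_ofReal
      have hzy : ρ ≤ ‖z - y‖ := by
        simpa [mem_ball, dist_eq_norm, not_lt] using hz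
      exact max_le hρε (Real.rpow_le_rpow_of_nonpos hρ hzy (neg_nonpos.mpr hε₂.le))
  have htrans : ∫⁻ z, (ball y ρ).indicator (fun z => ENNReal.ofReal (‖z - y‖ ^ (-ε₂))) z =
      ∫⁻ w in ball (0:E) ρ, ENNReal.ofReal (‖w‖ ^ (-ε₂)) := by
    have hmeas : Measurable (fun z : E =>
        (ball y ρ).indicator (fun z => ENNReal.ofReal (‖z - y‖ ^ (-ε₂))) z) :=
      (rpow_meas ε₂ y).indicator measurableSet_ball
    rw [← lintegral_indicator measurableSet_ball (fun w : E => ENNReal.ofReal (‖w‖ ^ (-ε₂)))]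
    calc ∫⁻ z, (ball y ρ).indicator (fun z => ENNReal.ofReal (‖z - y‖ ^ (-ε₂))) z
        = ∫⁻ z, (ball y ρ).indicator (fun z => ENNReal.ofReal (‖z - y‖ ^ (-ε₂))) z
            ∂(Measure.map (· + y) volume) := by rw [map_add_right_eq_self]
      _ = ∫⁻ w, (ball y ρ).indicator (fun z => ENNReal.ofReal (‖z - y‖ ^ (-ε₂))) (w + y) := by
          rw [lintegral_map hmeas (measurable_add_const y)]
      _ = ∫⁻ w, (ball (0:E) ρ).indicator (fun w => ENNReal.ofReal (‖w‖ ^ (-ε₂))) w := by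
          congr 1
          funext w
          by_cases hw : w ∈ ball (0:E) ρ
          · have hw' : w + y ∈ ball y ρ := by
              simpa [mem_ball, dist_eq_norm] using (mem_ball_zero_iff.mp hw)
            rw [Set.indicator_of_mem hw, Set.indicator_of_mem hw']
            simp
          · have hw' : w + y ∉ ball y ρ := by
              simp only [mem_ball, dist_eq_norm, add_sub_cancel_right] at *
              simpa [mem_ball_zero_iff] using hw
            rw [Set.indicator_of_notMem hw, Set.indicator_of_notMem hw']
  have hfirst : ENNReal.ofReal (ρ ^ (-ε₂)) * volume (ball x ρ) =
      ENNReal.ofReal (ρ ^ ((n:ℝ) - ε₂)) * V := by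
    rw [Measure.addHaar_ball _ _ hρ.le,
      show Module.finrank ℝ E = n from finrank_euclideanSpace_fin, ← mul_assoc,
      ← ENNReal.ofReal_mul (by positivity)]
    congr 2
    apply pos_log_eq _ _ (by positivity) (by positivity)
    rw [Real.log_mul (by positivity) (by positivity), Real.log_rpow hρ, Real.log_pow,
      Real.log_rpow hρ]
    ring
  calc ∫⁻ z in ball x ρ, ENNReal.ofReal (max 1 (‖z - y‖ ^ (-ε₂)))
      ≤ ∫⁻ z in ball x ρ, (ENNReal.ofReal (ρ ^ (-ε₂)) +
          (ball y ρ).indicator (fun z => ENNReal.ofReal (‖z - y‖ ^ (-ε₂))) z) :=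
        setLIntegral_mono (measurable_const.add
          ((rpow_meas ε₂ y).indicator measurableSet_ball)) hpt
    _ = ENNReal.ofReal (ρ ^ (-ε₂)) * volume (ball x ρ) +
        ∫⁻ z in ball x ρ, (ball y ρ).indicator (fun z => ENNReal.ofReal (‖z - y‖ ^ (-ε₂))) z := by
        rw [lintegral_add_left measurable_const, setLIntegral_const]
    _ ≤ ENNReal.ofReal (ρ ^ ((n:ℝ) - ε₂)) * V +
        ∫⁻ z, (ball y ρ).indicator (fun z => ENNReal.ofReal (‖z - y‖ ^ (-ε₂))) z := by
        rw [hfirst]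
        gcongr
        exact Measure.restrict_le_self
    _ ≤ ENNReal.ofReal (ρ ^ ((n:ℝ) - ε₂)) * V +
        ENNReal.ofReal (ρ ^ ((n:ℝ) - ε₂)) * (ENNReal.ofReal ((2:ℝ) ^ ε₂) * Jgeo n ε₂ * V) := by
        rw [htrans]
        gcongr
        exact aux_ball n hn hε₂ hε₂n hρ
    _ = ENNReal.ofReal (ρ ^ ((n:ℝ) - ε₂)) * Kconst n ε₂ := by
        rw [Kconst]
        ring

noncomputable def gfun {n : ℕ} (z y : EuclideanSpace ℝ (Fin n)) : ℝ :=
  Real.log (1 / ‖z - y‖) * (if ‖z - y‖ ≤ 1 then 1 else 0)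

lemma gfun_nonneg {n : ℕ} (z y : EuclideanSpace ℝ (Fin n)) : 0 ≤ gfun z y := by
  rw [gfun]
  split_ifs with h
  · rcases eq_or_lt_of_le (norm_nonneg (z - y)) with h0 | h0
    · simp [← h0]
    · have : (1:ℝ) ≤ 1 / ‖z - y‖ := by
        rw [le_div_iff₀ h0]; simpa using h
      simpa using mul_nonneg (Real.log_nonneg this) zero_le_one
  · simp

set_option maxHeartbeats 1000000 in
lemma gfun_measurable {n : ℕ} :
    Measurable (fun p : (EuclideanSpace ℝ (Fin n)) × (EuclideanSpace ℝ (Fin n)) =>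
      gfun p.1 p.2) := by
  have hnorm : Measurable (fun p : (EuclideanSpace ℝ (Fin n)) × (EuclideanSpace ℝ (Fin n)) =>
      ‖p.1 - p.2‖) := (continuous_fst.sub continuous_snd).norm.measurable
  have h1 : Measurable (fun p : (EuclideanSpace ℝ (Fin n)) × (EuclideanSpace ℝ (Fin n)) =>
      Real.log (1 / ‖p.1 - p.2‖)) :=
    Real.measurable_log.comp ((measurable_const (a := (1:ℝ))).div hnorm)
  have h2 : Measurable (fun p : (EuclideanSpace ℝ (Fin n)) × (EuclideanSpace ℝ (Fin n)) =>
      (if ‖p.1 - p.2‖ ≤ 1 then (1:ℝ) else 0)) := by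
    apply Measurable.ite _ measurable_const measurable_const
    exact measurableSet_le hnorm measurable_const
  simp only [gfun]
  exact h1.mul h2

lemma gfun_measurable_left {n : ℕ} (z : EuclideanSpace ℝ (Fin n)) :
    Measurable (fun y : EuclideanSpace ℝ (Fin n) => gfun z y) := by
  have hnorm : Measurable (fun y : EuclideanSpace ℝ (Fin n) => ‖z - y‖) :=
    (continuous_const.sub continuous_id).norm.measurable
  have h1 : Measurable (fun y : EuclideanSpace ℝ (Fin n) => Real.log (1 / ‖z - y‖)) :=
    Real.measurable_log.comp ((measurable_const (a := (1:ℝ))).div hnorm)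
  have h2 : Measurable (fun y : EuclideanSpace ℝ (Fin n) => (if ‖z - y‖ ≤ 1 then (1:ℝ) else 0)) := by
    apply Measurable.ite _ measurable_const measurable_const
    exact measurableSet_le hnorm measurable_const
  simp only [gfun]
  exact h1.mul h2

lemma gfun_mul (n : ℕ) (f : EuclideanSpace ℝ (Fin n) → ℝ) (z y : EuclideanSpace ℝ (Fin n)) :
    Real.log (1 / ‖z - y‖) * (if ‖z - y‖ ≤ 1 then f y else 0) = gfun z y * f y := by
  rw [gfun]
  split_ifs <;> ring

lemma exp_gfun_le {n : ℕ} {ε₂ c : ℝ} (hc : 0 ≤ c) (hcε : c ≤ ε₂)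
    (z y : EuclideanSpace ℝ (Fin n)) :
    Real.exp (c * gfun z y) ≤ max 1 (‖z - y‖ ^ (-ε₂)) := by
  rw [gfun]
  split_ifs with h
  · rcases eq_or_lt_of_le (norm_nonneg (z - y)) with h0 | h0
    · simp [← h0]
    · have hg : Real.log (1 / ‖z - y‖) * 1 = -Real.log ‖z - y‖ := by
        rw [one_div, Real.log_inv]; ring
      rw [hg]
      have : Real.exp (c * -Real.log ‖z - y‖) = ‖z - y‖ ^ (-c) := by
        rw [Real.rpow_def_of_pos h0]; ring_nf
      rw [this]
      exact le_max_of_le_right (Real.rpow_le_rpow_of_exponent_ge h0 h (by linarith))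
  · simp

lemma jensen_pt_s19 (n : ℕ) {γ q : ℝ} (hγ : 0 < γ) (hq : 1 ≤ q)
    (f : EuclideanSpace ℝ (Fin n) → ℝ) (hf : Integrable f) (hf0 : ∀ y, 0 ≤ f y)
    (hm : 0 < ∫ y, f y) (z : EuclideanSpace ℝ (Fin n)) :
    ENNReal.ofReal (Real.exp ((q / γ) * ∫ y, gfun z y * f y) * (∫ y, f y)) ≤
      ∫⁻ y, ENNReal.ofReal (Real.exp ((q * (∫ y, f y) / γ) * gfun z y) * f y) := by
  set m := ∫ y, f y with hmdef
  set c := q * m / γ with hcdef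
  have hc0 : 0 ≤ c := by positivity
  have hFnn : ∀ y, 0 ≤ Real.exp (c * gfun z y) * f y :=
    fun y => mul_nonneg (Real.exp_pos _).le (hf0 y)
  have hFm : AEStronglyMeasurable (fun y => Real.exp (c * gfun z y) * f y) volume := by
    exact ((Real.measurable_exp.comp ((gfun_measurable_left z).const_mul c)).aestronglyMeasurable).mul
      hf.aestronglyMeasurable
  by_cases hF : Integrable (fun y => Real.exp (c * gfun z y) * f y)
  case neg =>
    have : ∫⁻ y, ENNReal.ofReal (Real.exp (c * gfun z y) * f y) = ⊤ := by
      by_contra hne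
      exact hF ((lintegral_ofReal_ne_top_iff_integrable hFm
        (Filter.Eventually.of_forall hFnn)).mp hne)
    rw [this]; exact le_top
  case pos =>
  by_cases hint : Integrable (fun y => gfun z y * f y)
  case neg =>
    rw [integral_undef hint, mul_zero, Real.exp_zero, one_mul]
    calc ENNReal.ofReal m = ∫⁻ y, ENNReal.ofReal (f y) :=
          ofReal_integral_eq_lintegral_ofReal hf (Filter.Eventually.of_forall hf0)
      _ ≤ _ := by
          apply lintegral_mono fun y => ?_
          apply ENNReal.ofReal_le_ofReal
          nlinarith [Real.one_le_exp (mul_nonneg hc0 (gfun_nonneg z y)), hf0 y,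
            Real.exp_pos (c * gfun z y)]
  case pos =>
  set a := ∫ y, gfun z y * f y with hadef
  set t₀ := a / m with ht₀
  have hqa : (q / γ) * a = c * t₀ := by
    rw [hcdef, ht₀]; field_simp
  have tangent : ∀ y, Real.exp (c*t₀) * ((1 - c*t₀) * f y + c * (gfun z y * f y)) ≤
      Real.exp (c * gfun z y) * f y := by
    intro y
    have h1 : Real.exp (c*t₀) * (1 + (c * gfun z y - c * t₀)) ≤ Real.exp (c * gfun z y) := by
      calc Real.exp (c*t₀) * (1 + (c * gfun z y - c * t₀))
          ≤ Real.exp (c*t₀) * Real.exp (c * gfun z y - c * t₀) := by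
            have := Real.add_one_le_exp (c * gfun z y - c * t₀)
            have h2 := (Real.exp_pos (c*t₀)).le
            nlinarith
        _ = Real.exp (c * gfun z y) := by rw [← Real.exp_add]; ring_nf
    calc Real.exp (c*t₀) * ((1 - c*t₀) * f y + c * (gfun z y * f y))
        = (Real.exp (c*t₀) * (1 + (c * gfun z y - c * t₀))) * f y := by ring
      _ ≤ Real.exp (c * gfun z y) * f y := mul_le_mul_of_nonneg_right h1 (hf0 y)
  have hint2 : Integrable (fun y => Real.exp (c*t₀) * ((1 - c*t₀) * f y + c * (gfun z y * f y))) :=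
    (((hf.const_mul _).add (hint.const_mul _)).const_mul _)
  have hle := integral_mono hint2 hF tangent
  have hval : ∫ y, Real.exp (c*t₀) * ((1 - c*t₀) * f y + c * (gfun z y * f y))
      = Real.exp (c*t₀) * m := by
    rw [integral_const_mul, integral_add (hf.const_mul _) (hint.const_mul _),
      integral_const_mul, integral_const_mul, ← hmdef, ← hadef]
    have : a = t₀ * m := by rw [ht₀]; field_simp
    rw [this]; ring
  rw [hval] at hle
  rw [hqa]
  calc ENNReal.ofReal (Real.exp (c * t₀) * m) ≤
        ENNReal.ofReal (∫ y, Real.exp (c * gfun z y) * f y) := ENNReal.ofReal_le_ofReal hle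
    _ = _ := ofReal_integral_eq_lintegral_ofReal hF (Filter.Eventually.of_forall hFnn)
theorem stmt_19 (n : ℕ) (hn : 1 ≤ n) (ε₂ : ℝ) (hε₂ : 0 < ε₂) (hε₂n : ε₂ < n) :
    ∃ C > 0, ∀ (f : EuclideanSpace ℝ (Fin n) → ℝ) (γ q : ℝ),
      Integrable f → (∀ y, 0 ≤ f y) → 0 < γ → 1 ≤ q →
      q * (∫ y, f y) / γ ≤ ε₂ →
      ∀ (ρ : ℝ), ρ ∈ Set.Ioc (0 : ℝ) 1 → ∀ x : EuclideanSpace ℝ (Fin n),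
        ∫⁻ z in ball x ρ,
          ENNReal.ofReal (Real.exp ((q / γ) *
            ∫ y, Real.log (1 / ‖z - y‖) * (if ‖z - y‖ ≤ 1 then f y else 0))) ≤
          ENNReal.ofReal (C * ρ ^ ((n : ℝ) - ε₂)) := by
  classical
  refine ⟨(Kconst n ε₂).toReal + 1, by positivity, ?_⟩
  intro f γ q hf hf0 hγ hq hqm ρ hρmem x
  obtain ⟨hρ, hρ1⟩ := hρmem
  have hnt : Nontrivial (EuclideanSpace ℝ (Fin n)) := by
    refine ⟨EuclideanSpace.single ⟨0, hn⟩ 1, 0, fun h => ?_⟩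
    have := congrArg (fun v : EuclideanSpace ℝ (Fin n) => v ⟨0, hn⟩) h
    simp at this
  set m := ∫ y, f y with hm
  have hm0 : 0 ≤ m := integral_nonneg hf0
  have hKtop : Kconst n ε₂ ≠ ⊤ := (Kconst_lt_top n ε₂ hε₂n).ne
  have hfinal : ENNReal.ofReal (ρ ^ ((n:ℝ) - ε₂)) * Kconst n ε₂ ≤
      ENNReal.ofReal (((Kconst n ε₂).toReal + 1) * ρ ^ ((n:ℝ) - ε₂)) := by
    conv_lhs => rw [← ENNReal.ofReal_toReal hKtop]
    rw [← ENNReal.ofReal_mul (Real.rpow_nonneg hρ.le _)]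
    apply ENNReal.ofReal_le_ofReal
    have h1 : 0 ≤ ρ ^ ((n:ℝ) - ε₂) := Real.rpow_nonneg hρ.le _
    nlinarith [ENNReal.toReal_nonneg (a := Kconst n ε₂)]
  have hinner : ∀ z : EuclideanSpace ℝ (Fin n),
      (∫ y, Real.log (1 / ‖z - y‖) * (if ‖z - y‖ ≤ 1 then f y else 0)) =
        ∫ y, gfun z y * f y := by
    intro z
    congr 1
    funext y
    exact gfun_mul n f z y
  rcases eq_or_lt_of_le hm0 with hm0' | hmpos
  · -- m = 0 case
    have hf_ae : f =ᵐ[volume] 0 := (integral_eq_zero_iff_of_nonneg hf0 hf).mp hm0'.symm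
    have hzero : ∀ z : EuclideanSpace ℝ (Fin n),
        (∫ y, Real.log (1 / ‖z - y‖) * (if ‖z - y‖ ≤ 1 then f y else 0)) = 0 := by
      intro z
      rw [hinner z]
      apply integral_eq_zero_of_ae
      filter_upwards [hf_ae] with y hy
      simp [hy]
    calc ∫⁻ z in ball x ρ, ENNReal.ofReal (Real.exp ((q / γ) *
            ∫ y, Real.log (1 / ‖z - y‖) * (if ‖z - y‖ ≤ 1 then f y else 0)))
        = ∫⁻ _ in ball x ρ, 1 := by
          apply lintegral_congr
          intro z
          rw [hzero z]
          simp
      _ = volume (ball x ρ) := by simp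
      _ ≤ ENNReal.ofReal (ρ ^ ((n:ℝ) - ε₂)) * Kconst n ε₂ := by
          rw [Measure.addHaar_ball _ _ hρ.le, finrank_euclideanSpace_fin]
          have h1 : ENNReal.ofReal (ρ ^ (n:ℕ)) ≤ ENNReal.ofReal (ρ ^ ((n:ℝ) - ε₂)) := by
            apply ENNReal.ofReal_le_ofReal
            rw [← Real.rpow_natCast ρ n]
            exact Real.rpow_le_rpow_of_exponent_ge hρ hρ1 (by linarith)
          have h2 : volume (ball (0 : EuclideanSpace ℝ (Fin n)) 1) ≤ Kconst n ε₂ := by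
            rw [Kconst]; exact le_add_self
          exact mul_le_mul' h1 h2
      _ ≤ _ := hfinal
  · -- m > 0 case
    set c := q * m / γ with hc
    have hcε : c ≤ ε₂ := hqm
    have hc0 : 0 ≤ c := by positivity
    have hM0 : ENNReal.ofReal m ≠ 0 := (ENNReal.ofReal_pos.mpr hmpos).ne'
    have hMtop : ENNReal.ofReal m ≠ ⊤ := ENNReal.ofReal_ne_top
    set Φ : EuclideanSpace ℝ (Fin n) → EuclideanSpace ℝ (Fin n) → ℝ≥0∞ :=
      fun z y => ENNReal.ofReal (Real.exp (c * gfun z y) * f y) with hΦ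
    have hptz : ∀ z : EuclideanSpace ℝ (Fin n),
        ENNReal.ofReal (Real.exp ((q / γ) * ∫ y, gfun z y * f y)) ≤
          (ENNReal.ofReal m)⁻¹ * ∫⁻ y, Φ z y := by
      intro z
      have hj := jensen_pt_s19 n hγ hq f hf hf0 hmpos z
      rw [ENNReal.ofReal_mul (Real.exp_pos _).le] at hj
      calc ENNReal.ofReal (Real.exp ((q / γ) * ∫ y, gfun z y * f y))
          = ENNReal.ofReal (Real.exp ((q / γ) * ∫ y, gfun z y * f y)) * ENNReal.ofReal m *
              (ENNReal.ofReal m)⁻¹ := by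
            rw [mul_assoc, ENNReal.mul_inv_cancel hM0 hMtop, mul_one]
        _ ≤ (∫⁻ y, Φ z y) * (ENNReal.ofReal m)⁻¹ := mul_le_mul_left hj _
        _ = _ := mul_comm _ _
    have hΦmeas : AEMeasurable (Function.uncurry Φ)
        ((volume.restrict (ball x ρ)).prod volume) := by
      have h1 : Measurable (fun p : (EuclideanSpace ℝ (Fin n)) × (EuclideanSpace ℝ (Fin n)) =>
          Real.exp (c * gfun p.1 p.2)) :=
        Real.measurable_exp.comp (gfun_measurable.const_mul c)
      have h2 : AEMeasurable (fun p : (EuclideanSpace ℝ (Fin n)) × (EuclideanSpace ℝ (Fin n)) =>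
          f p.2) ((volume.restrict (ball x ρ)).prod volume) :=
        hf.aestronglyMeasurable.comp_snd.aemeasurable
      exact ENNReal.measurable_ofReal.comp_aemeasurable (h1.aemeasurable.mul h2)
    have hIinv : (ENNReal.ofReal m)⁻¹ ≠ ⊤ := ENNReal.inv_ne_top.mpr hM0
    calc ∫⁻ z in ball x ρ, ENNReal.ofReal (Real.exp ((q / γ) *
            ∫ y, Real.log (1 / ‖z - y‖) * (if ‖z - y‖ ≤ 1 then f y else 0)))
        = ∫⁻ z in ball x ρ, ENNReal.ofReal (Real.exp ((q / γ) * ∫ y, gfun z y * f y)) := by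
          apply lintegral_congr
          intro z
          rw [hinner z]
      _ ≤ ∫⁻ z in ball x ρ, (ENNReal.ofReal m)⁻¹ * ∫⁻ y, Φ z y :=
          lintegral_mono fun z => hptz z
      _ = (ENNReal.ofReal m)⁻¹ * ∫⁻ z in ball x ρ, ∫⁻ y, Φ z y :=
          lintegral_const_mul' _ _ hIinv
      _ = (ENNReal.ofReal m)⁻¹ * ∫⁻ y, ∫⁻ z in ball x ρ, Φ z y := by
          rw [lintegral_lintegral_swap hΦmeas]
      _ ≤ (ENNReal.ofReal m)⁻¹ * ∫⁻ y, ENNReal.ofReal (f y) *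
            (ENNReal.ofReal (ρ ^ ((n:ℝ) - ε₂)) * Kconst n ε₂) := by
          apply mul_le_mul_right
          apply lintegral_mono
          intro y
          calc ∫⁻ z in ball x ρ, Φ z y
              = ∫⁻ z in ball x ρ, ENNReal.ofReal (Real.exp (c * gfun z y)) *
                  ENNReal.ofReal (f y) := by
                apply lintegral_congr
                intro z
                simp only [hΦ]
                rw [ENNReal.ofReal_mul (Real.exp_pos _).le]
            _ = (∫⁻ z in ball x ρ, ENNReal.ofReal (Real.exp (c * gfun z y))) *
                  ENNReal.ofReal (f y) := lintegral_mul_const' _ _ ENNReal.ofReal_ne_top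
            _ ≤ (ENNReal.ofReal (ρ ^ ((n:ℝ) - ε₂)) * Kconst n ε₂) * ENNReal.ofReal (f y) := by
                apply mul_le_mul_left
                calc ∫⁻ z in ball x ρ, ENNReal.ofReal (Real.exp (c * gfun z y))
                    ≤ ∫⁻ z in ball x ρ, ENNReal.ofReal (max 1 (‖z - y‖ ^ (-ε₂))) :=
                      lintegral_mono fun z =>
                        ENNReal.ofReal_le_ofReal (exp_gfun_le hc0 hcε z y)
                  _ ≤ _ := aux_ball2 n hn hε₂ hε₂n hρ hρ1 x y
            _ = ENNReal.ofReal (f y) * (ENNReal.ofReal (ρ ^ ((n:ℝ) - ε₂)) * Kconst n ε₂) :=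
                mul_comm _ _
      _ = (ENNReal.ofReal m)⁻¹ * (ENNReal.ofReal m *
            (ENNReal.ofReal (ρ ^ ((n:ℝ) - ε₂)) * Kconst n ε₂)) := by
          rw [lintegral_mul_const' _ _ (ENNReal.mul_ne_top ENNReal.ofReal_ne_top hKtop),
            ← ofReal_integral_eq_lintegral_ofReal hf (Filter.Eventually.of_forall hf0)]
      _ = ENNReal.ofReal (ρ ^ ((n:ℝ) - ε₂)) * Kconst n ε₂ := by
          rw [← mul_assoc, ENNReal.inv_mul_cancel hM0 hMtop, one_mul]
      _ ≤ _ := hfinal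
end
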